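/- arXiv:1312.2690 — 8 statements merged into one kernel-verified Lean document; each statement's English description precedes it below -/
import Mathlib

section
/- Let N ≥ 1 and let x_1 ∈ ℝ^n be fixed. Let (Ω, F, P) be a probability space, and for k = 1, …, N let G_k : Ω → ℝ^n be square-integrable random vectors and γ_k ∈ (0, 2/L] real stepsizes. Define random iterates recursively by x_{k+1}(ω) := x⁺(x_k(ω), G_k(ω), γ_k) (the unique minimizer of u ↦ ψ_{γ_k}(x_k(ω), G_k(ω), u)), and set g̃_k^r := P_{γ_k}(x_k, G_k) and g̃_k := P_{γ_k}(x_k, ∇f(x_k)). Assume Φ_h(x) ≥ Φ_h^low for all x ∈ ℝ^n, and that for each k: E[⟨G_k − ∇f(x_k), g̃_k⟩] = 0 and E[‖G_k − ∇f(x_k)‖²] ≤ σ²/m_k, where σ > 0 and m_k > 0. Then Σ_{k=1}^N (γ_k − L γ_k²/2) · E[‖g̃_k^r‖²] ≤ Φ_h(x_1) − Φ_h^low + σ² Σ_{k=1}^N γ_k/m_k. (Equivalently, if R is a random index on {1,…,N}, independent of the G_k, with P(R = k) proportional to γ_k − Lγ_k²/2 and γ_k < 2/L for at least one k, then E[‖g̃_R^r‖²]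 ≤ (Φ_h(x_1) − Φ_h^low + σ² Σ_k γ_k/m_k) / Σ_k (γ_k − Lγ_k²/2).) -/
open MeasureTheory
open scoped RealInnerProductSpace BigOperators ProbabilityTheory

lemma taylor_quad {E V : Type*} [NormedAddCommGroup E] [NormedSpace ℝ E]
    [NormedAddCommGroup V] [NormedSpace ℝ V] [CompleteSpace V]
    (F : E → V) (D : E → E →L[ℝ] V) (K : ℝ) (hK : 0 ≤ K)
    (hD : ∀ z, HasFDerivAt F (D z) z)
    (hLip : ∀ a b, ‖D a - D b‖ ≤ K * ‖a - b‖)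
    (x y : E) : ‖F y - F x - D x (y - x)‖ ≤ K / 2 * ‖y - x‖ ^ 2 := by
  have hDcont : Continuous D := by
    have : LipschitzWith (Real.toNNReal K) D := by
      apply LipschitzWith.of_dist_le_mul
      intro a b
      rw [dist_eq_norm]
      calc ‖D a - D b‖ ≤ K * ‖a - b‖ := hLip a b
        _ = Real.toNNReal K * dist a b := by
            rw [Real.coe_toNNReal K hK, dist_eq_norm]
    exact this.continuous
  set G : ℝ → V := fun s => F (x + s • (y - x)) - (D x) (x + s • (y - x)) with hG
  have hG' : ∀ s : ℝ, HasDerivAt G ((D (x + s • (y - x)) - D x) (y - x)) s := by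
    intro s
    have hline : HasDerivAt (fun s : ℝ => x + s • (y - x)) (y - x) s := by
      simpa using ((hasDerivAt_id s).smul_const (y - x)).const_add x
    have h1 : HasDerivAt (fun s : ℝ => F (x + s • (y - x)))
        ((D (x + s • (y - x))) (y - x)) s := by
      exact (hD (x + s • (y - x))).comp_hasDerivAt s hline
    have h2 : HasDerivAt (fun s : ℝ => (D x) (x + s • (y - x)))
        ((D x) (y - x)) s := (D x).hasFDerivAt.comp_hasDerivAt s hline
    have h3 := h1.sub h2
    rw [ContinuousLinearMap.sub_apply]
    exact h3
  have hcont : Continuous fun s : ℝ => (D (x + s • (y - x)) - D x) (y - x) := by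
    have c1 : Continuous fun s : ℝ => (D (x + s • (y - x)) - D x) :=
      (hDcont.comp (by continuity)).sub continuous_const
    exact (ContinuousLinearMap.apply ℝ V (y - x)).continuous.comp c1
  have hFTC : ∫ s in (0:ℝ)..1, (D (x + s • (y - x)) - D x) (y - x) = G 1 - G 0 :=
    intervalIntegral.integral_eq_sub_of_hasDerivAt (fun s _ => hG' s)
      (hcont.intervalIntegrable 0 1)
  have hG10 : G 1 - G 0 = F y - F x - D x (y - x) := by
    have e1 : x + (1:ℝ) • (y - x) = y := by simp
    have e0 : x + (0:ℝ) • (y - x) = x := by simp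
    simp only [hG, e1, e0, map_sub]
    abel
  rw [← hG10, ← hFTC]
  calc ‖∫ s in (0:ℝ)..1, (D (x + s • (y - x)) - D x) (y - x)‖
      ≤ ∫ s in (0:ℝ)..1, ‖(D (x + s • (y - x)) - D x) (y - x)‖ :=
        intervalIntegral.norm_integral_le_integral_norm (by norm_num)
    _ ≤ ∫ s in (0:ℝ)..1, K * s * ‖y - x‖ ^ 2 := by
        apply intervalIntegral.integral_mono_on (by norm_num)
        · exact (hcont.norm).intervalIntegrable 0 1
        · exact (Continuous.intervalIntegrable (by continuity) 0 1)
        · intro s hs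
          calc ‖(D (x + s • (y - x)) - D x) (y - x)‖
              ≤ ‖D (x + s • (y - x)) - D x‖ * ‖y - x‖ :=
                ContinuousLinearMap.le_opNorm _ _
            _ ≤ (K * ‖(x + s • (y - x)) - x‖) * ‖y - x‖ := by
                apply mul_le_mul_of_nonneg_right (hLip _ _) (norm_nonneg _)
            _ = K * (s * ‖y - x‖) * ‖y - x‖ := by
                rw [add_sub_cancel_left, norm_smul, Real.norm_eq_abs,
                  abs_of_nonneg hs.1]
            _ = K * s * ‖y - x‖ ^ 2 := by ring
    _ = K / 2 * ‖y - x‖ ^ 2 := by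
        have : ∫ s in (0:ℝ)..1, K * s * ‖y - x‖ ^ 2
            = (K * ‖y - x‖ ^ 2) * ∫ s in (0:ℝ)..1, s := by
          rw [← intervalIntegral.integral_const_mul]
          congr 1; ext s; ring
        rw [this, integral_id]
        ring

lemma comb_norm_sq {E : Type*} [NormedAddCommGroup E] [InnerProductSpace ℝ E]
    (b c : E) (l : ℝ) :
    ‖(1 - l) • b + l • c‖ ^ 2 = (1 - l) * ‖b‖ ^ 2 + l * ‖c‖ ^ 2 - l * (1 - l) * ‖b - c‖ ^ 2 := by
  rw [← real_inner_self_eq_norm_sq, ← real_inner_self_eq_norm_sq,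
    ← real_inner_self_eq_norm_sq, ← real_inner_self_eq_norm_sq]
  simp only [inner_add_left, inner_add_right, inner_sub_left, inner_sub_right,
    real_inner_smul_left, real_inner_smul_right, real_inner_comm b c]
  ring

lemma strong_min {E : Type*} [NormedAddCommGroup E] [InnerProductSpace ℝ E]
    (Q : E → ℝ) (a xs : E) (t : ℝ) (ht : 0 < t)
    (hQ : ∀ p q : E, ∀ l : ℝ, 0 ≤ l → l ≤ 1 →
      Q ((1 - l) • p + l • q) ≤ (1 - l) * Q p + l * Q q)
    (hmin : ∀ u, Q xs + ‖xs - a‖ ^ 2 / (2 * t) ≤ Q u + ‖u - a‖ ^ 2 / (2 * t)) :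
    ∀ u, Q xs + ‖xs - a‖ ^ 2 / (2 * t) + ‖u - xs‖ ^ 2 / (2 * t)
      ≤ Q u + ‖u - a‖ ^ 2 / (2 * t) := by
  intro u
  set A := Q xs + ‖xs - a‖ ^ 2 / (2 * t) with hA
  set B := Q u + ‖u - a‖ ^ 2 / (2 * t) with hB
  set C := ‖u - xs‖ ^ 2 / (2 * t) with hC
  have hC0 : 0 ≤ C := by positivity
  have key : ∀ l : ℝ, 0 < l → l ≤ 1 → A + (1 - l) * C ≤ B := by
    intro l hl0 hl1
    have hw := hmin ((1 - l) • xs + l • u)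
    have hcomb : ((1 - l) • xs + l • u) - a = (1 - l) • (xs - a) + l • (u - a) := by
      have h1 : (1 - l) + l = 1 := by ring
      rw [smul_sub, smul_sub]
      rw [show (1 - l) • xs - (1 - l) • a + (l • u - l • a)
          = (1 - l) • xs + l • u - ((1 - l) • a + l • a) by abel,
        ← add_smul, h1, one_smul]
    have hnorm : ‖((1 - l) • xs + l • u) - a‖ ^ 2
        = (1 - l) * ‖xs - a‖ ^ 2 + l * ‖u - a‖ ^ 2 - l * (1 - l) * ‖u - xs‖ ^ 2 := by
      rw [hcomb, comb_norm_sq]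
      rw [show (xs - a) - (u - a) = xs - u by abel, norm_sub_rev xs u]
    have hQw := hQ xs u l (le_of_lt hl0) hl1
    have h2t : 0 < 2 * t := by linarith
    have : A ≤ (1 - l) * A + l * B - l * (1 - l) * C := by
      calc A ≤ Q ((1 - l) • xs + l • u) + ‖((1 - l) • xs + l • u) - a‖ ^ 2 / (2 * t) := hw
        _ ≤ ((1 - l) * Q xs + l * Q u) +
            ((1 - l) * ‖xs - a‖ ^ 2 + l * ‖u - a‖ ^ 2 - l * (1 - l) * ‖u - xs‖ ^ 2) / (2 * t) := by
          rw [hnorm]; linarith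
        _ = (1 - l) * A + l * B - l * (1 - l) * C := by
          rw [hA, hB, hC]; field_simp; ring
    have hlA : l * A + l * (1 - l) * C ≤ l * B := by linarith
    have := (mul_le_mul_iff_right₀ hl0).mp (by linarith : l * (A + (1 - l) * C) ≤ l * B)
    exact this
  -- take l → 0
  by_cases hC' : C = 0
  · have := key 1 one_pos le_rfl
    simpa [hC'] using this
  · have hCpos : 0 < C := lt_of_le_of_ne hC0 (Ne.symm hC')
    refine le_of_forall_pos_le_add ?_
    intro ε hε
    rcases le_or_gt C ε with hle | hlt
    · have := key 1 one_pos le_rfl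
      linarith
    · have hl0 : 0 < ε / C := div_pos hε hCpos
      have hl1 : ε / C ≤ 1 := by
        rw [div_le_one hCpos]; linarith
      have := key (ε / C) hl0 hl1
      have : A + C - (ε / C) * C ≤ B := by
        have heq : (1 - ε / C) * C = C - (ε / C) * C := by ring
        linarith [key (ε / C) hl0 hl1, heq ▸ key (ε / C) hl0 hl1]
      have hεC : (ε / C) * C = ε := div_mul_cancel₀ ε hC'
      rw [hεC] at this
      linarith

lemma comb_sub {E : Type*} [AddCommGroup E] [Module ℝ E] (p r a : E) (l : ℝ) :
    ((1 - l) • p + l • r) - a = (1 - l) • (p - a) + l • (r - a) := by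
  rw [smul_sub, smul_sub,
    show (1 - l) • p - (1 - l) • a + (l • r - l • a)
      = (1 - l) • p + l • r - ((1 - l) • a + l • a) by abel,
    ← add_smul]
  norm_num

lemma Qcomb {E F : Type*} [NormedAddCommGroup E] [InnerProductSpace ℝ E]
    [NormedAddCommGroup F] [InnerProductSpace ℝ F]
    (h : F → ℝ) (hconv : ConvexOn ℝ Set.univ h) (g a : E) (ca : F) (T : E →L[ℝ] F) :
    ∀ p r : E, ∀ l : ℝ, 0 ≤ l → l ≤ 1 →
      ⟪g, ((1 - l) • p + l • r) - a⟫ + h (ca + T (((1 - l) • p + l • r) - a)) ≤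
        (1 - l) * (⟪g, p - a⟫ + h (ca + T (p - a))) + l * (⟪g, r - a⟫ + h (ca + T (r - a))) := by
  intro p r l hl0 hl1
  rw [comb_sub]
  have hinner : ⟪g, (1 - l) • (p - a) + l • (r - a)⟫
      = (1 - l) * ⟪g, p - a⟫ + l * ⟪g, r - a⟫ := by
    rw [inner_add_right, real_inner_smul_right, real_inner_smul_right]
  have haff : ca + T ((1 - l) • (p - a) + l • (r - a))
      = (1 - l) • (ca + T (p - a)) + l • (ca + T (r - a)) := by
    rw [map_add, T.map_smul, T.map_smul, smul_add, smul_add,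
      show (1 - l) • ca + (1 - l) • T (p - a) + (l • ca + l • T (r - a))
        = ((1 - l) • ca + l • ca) + ((1 - l) • T (p - a) + l • T (r - a)) by abel,
      ← add_smul]
    norm_num
  rw [hinner, haff]
  have := hconv.2 (Set.mem_univ (ca + T (p - a))) (Set.mem_univ (ca + T (r - a)))
    (by linarith : (0:ℝ) ≤ 1 - l) hl0 (by ring)
  dsimp at this
  linarith

lemma nonexpansive {E F : Type*} [NormedAddCommGroup E] [InnerProductSpace ℝ E]
    [NormedAddCommGroup F] [InnerProductSpace ℝ F]
    (h : F → ℝ) (hconv : ConvexOn ℝ Set.univ h) (a : E) (ca : F) (T : E →L[ℝ] F)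
    (t : ℝ) (ht : 0 < t) (g₁ g₂ x₁ x₂ : E)
    (hx₁ : ∀ u, ⟪g₁, x₁ - a⟫ + h (ca + T (x₁ - a)) + ‖x₁ - a‖ ^ 2 / (2 * t) ≤
      ⟪g₁, u - a⟫ + h (ca + T (u - a)) + ‖u - a‖ ^ 2 / (2 * t))
    (hx₂ : ∀ u, ⟪g₂, x₂ - a⟫ + h (ca + T (x₂ - a)) + ‖x₂ - a‖ ^ 2 / (2 * t) ≤
      ⟪g₂, u - a⟫ + h (ca + T (u - a)) + ‖u - a‖ ^ 2 / (2 * t)) :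
    ‖x₁ - x₂‖ ≤ t * ‖g₁ - g₂‖ := by
  have hs₁ := strong_min (fun u => ⟪g₁, u - a⟫ + h (ca + T (u - a))) a x₁ t ht
    (fun p r l hl0 hl1 => Qcomb h hconv g₁ a ca T p r l hl0 hl1) hx₁ x₂
  have hs₂ := strong_min (fun u => ⟪g₂, u - a⟫ + h (ca + T (u - a))) a x₂ t ht
    (fun p r l hl0 hl1 => Qcomb h hconv g₂ a ca T p r l hl0 hl1) hx₂ x₁
  have hkey : ‖x₁ - x₂‖ ^ 2 / t ≤ ⟪g₁ - g₂, x₂ - x₁⟫ := by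
    have e1 : ⟪g₁ - g₂, x₂ - x₁⟫ = (⟪g₁, x₂ - a⟫ - ⟪g₂, x₂ - a⟫) - (⟪g₁, x₁ - a⟫ - ⟪g₂, x₁ - a⟫) := by
      simp only [inner_sub_left, inner_sub_right]
      ring
    have hn : ‖x₂ - x₁‖ = ‖x₁ - x₂‖ := norm_sub_rev _ _
    rw [e1]
    rw [hn] at hs₁
    have h2t : 0 < 2 * t := by linarith
    have : ‖x₁ - x₂‖ ^ 2 / (2 * t) + ‖x₁ - x₂‖ ^ 2 / (2 * t) = ‖x₁ - x₂‖ ^ 2 / t := by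
      field_simp; ring
    linarith
  have hcs : ⟪g₁ - g₂, x₂ - x₁⟫ ≤ ‖g₁ - g₂‖ * ‖x₁ - x₂‖ := by
    calc ⟪g₁ - g₂, x₂ - x₁⟫ ≤ ‖g₁ - g₂‖ * ‖x₂ - x₁‖ := real_inner_le_norm _ _
      _ = ‖g₁ - g₂‖ * ‖x₁ - x₂‖ := by rw [norm_sub_rev x₂ x₁]
  rcases eq_or_lt_of_le (norm_nonneg (x₁ - x₂)) with hz | hz
  · rw [← hz]; positivity
  · have : ‖x₁ - x₂‖ ^ 2 ≤ t * (‖g₁ - g₂‖ * ‖x₁ - x₂‖) := by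
      rw [div_le_iff₀ ht] at hkey
      calc ‖x₁ - x₂‖ ^ 2 ≤ ⟪g₁ - g₂, x₂ - x₁⟫ * t := hkey
        _ ≤ t * (‖g₁ - g₂‖ * ‖x₁ - x₂‖) := by
          rw [mul_comm]; exact mul_le_mul_of_nonneg_left hcs (le_of_lt ht)
    have := (mul_le_mul_iff_left₀ hz).mpr (le_refl (1:ℝ))
    nlinarith [hz]

lemma step_ineq {E F : Type*} [NormedAddCommGroup E] [InnerProductSpace ℝ E] [CompleteSpace E]
    [NormedAddCommGroup F] [InnerProductSpace ℝ F] [CompleteSpace F]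
    (f : E → ℝ) (gradf : E → E) (c : E → F) (J : E → E →L[ℝ] F) (h : F → ℝ)
    (L_g L_h L_J L : ℝ) (hLg : 0 < L_g) (hLh : 0 < L_h) (hLJ : 0 < L_J)
    (hL : L = L_g + L_h * L_J)
    (hf : ∀ z, HasGradientAt f (gradf z) z)
    (hgradLip : ∀ a b, ‖gradf a - gradf b‖ ≤ L_g * ‖a - b‖)
    (hc : ∀ z, HasFDerivAt c (J z) z)
    (hJLip : ∀ a b, ‖J a - J b‖ ≤ L_J * ‖a - b‖)
    (hconv : ConvexOn ℝ Set.univ h)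
    (hhLip : ∀ a b, |h a - h b| ≤ L_h * ‖a - b‖)
    (a g : E) (t : ℝ) (ht : 0 < t) (xp xg : E)
    (hxp : ∀ u, ⟪g, xp - a⟫ + h (c a + J a (xp - a)) + ‖xp - a‖ ^ 2 / (2 * t) ≤
      ⟪g, u - a⟫ + h (c a + J a (u - a)) + ‖u - a‖ ^ 2 / (2 * t))
    (hxg : ∀ u, ⟪gradf a, xg - a⟫ + h (c a + J a (xg - a)) + ‖xg - a‖ ^ 2 / (2 * t) ≤
      ⟪gradf a, u - a⟫ + h (c a + J a (u - a)) + ‖u - a‖ ^ 2 / (2 * t)) :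
    (t - L * t ^ 2 / 2) * ‖t⁻¹ • (a - xp)‖ ^ 2 ≤
      (f a + h (c a)) - (f xp + h (c xp)) +
        t * ⟪g - gradf a, t⁻¹ • (a - xg)⟫ + t * ‖g - gradf a‖ ^ 2 := by
  set d := xp - a with hd
  set δ := g - gradf a with hδ
  -- strong minimality at u = a
  have h1 : ⟪g, d⟫ + h (c a + J a d) + ‖d‖ ^ 2 / t ≤ h (c a) := by
    have := strong_min (fun u => ⟪g, u - a⟫ + h (c a + J a (u - a))) a xp t ht
      (fun p r l hl0 hl1 => Qcomb h hconv g a (c a) (J a) p r l hl0 hl1) hxp a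
    simp only [sub_self, inner_zero_right, map_zero, add_zero, norm_zero] at this
    rw [norm_sub_rev a xp, ← hd] at this
    have h2t : 0 < 2 * t := by linarith
    have hsplit : ‖d‖ ^ 2 / (2 * t) + ‖d‖ ^ 2 / (2 * t) = ‖d‖ ^ 2 / t := by
      field_simp; ring
    simp only [ne_eq, OfNat.ofNat_ne_zero, not_false_eq_true, zero_pow, zero_div] at this
    linarith
  -- smoothness of f
  have h2 : f xp - f a - ⟪gradf a, d⟫ ≤ L_g / 2 * ‖d‖ ^ 2 := by
    have htq := taylor_quad f (fun z => (InnerProductSpace.toDual ℝ E (gradf z) : E →L[ℝ] ℝ))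
      L_g (le_of_lt hLg) (fun z => (hf z).hasFDerivAt) ?_ a xp
    · rw [InnerProductSpace.toDual_apply_apply, Real.norm_eq_abs] at htq
      have := le_of_abs_le htq
      linarith [this]
    · intro p r
      have : (InnerProductSpace.toDual ℝ E (gradf p) : E →L[ℝ] ℝ) -
          InnerProductSpace.toDual ℝ E (gradf r) =
          InnerProductSpace.toDual ℝ E (gradf p - gradf r) := by
        rw [map_sub]
      rw [this]
      rw [show ‖(InnerProductSpace.toDual ℝ E (gradf p - gradf r) : E →L[ℝ] ℝ)‖
          = ‖gradf p - gradf r‖ from (InnerProductSpace.toDual ℝ E).norm_map _]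
      exact hgradLip p r
  -- quadratic bound for c
  have h3 : ‖c xp - c a - J a d‖ ≤ L_J / 2 * ‖d‖ ^ 2 :=
    taylor_quad c J L_J (le_of_lt hLJ) hc hJLip a xp
  -- Lipschitz h
  have h4 : h (c xp) ≤ h (c a + J a d) + L_h * (L_J / 2 * ‖d‖ ^ 2) := by
    have habs := hhLip (c xp) (c a + J a d)
    have : ‖c xp - (c a + J a d)‖ = ‖c xp - c a - J a d‖ := by
      rw [sub_add_eq_sub_sub]
    rw [this] at habs
    have hb := le_of_abs_le habs
    have := mul_le_mul_of_nonneg_left h3 (le_of_lt hLh)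
    linarith
  -- nonexpansiveness
  have h5 : ‖xg - xp‖ ≤ t * ‖δ‖ := by
    have := nonexpansive h hconv a (c a) (J a) t ht (gradf a) g xg xp hxg hxp
    rw [show ‖gradf a - g‖ = ‖δ‖ by rw [hδ, norm_sub_rev]] at this
    exact this
  -- inner product manipulations
  have h6 : ⟪δ, a - xp⟫ ≤ ⟪δ, a - xg⟫ + t * ‖δ‖ ^ 2 := by
    have hsplit : ⟪δ, a - xp⟫ = ⟪δ, a - xg⟫ + ⟪δ, xg - xp⟫ := by
      rw [← inner_add_right]
      congr 1
      abel
    have hcs : ⟪δ, xg - xp⟫ ≤ ‖δ‖ * ‖xg - xp‖ := real_inner_le_norm _ _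
    have : ‖δ‖ * ‖xg - xp‖ ≤ ‖δ‖ * (t * ‖δ‖) :=
      mul_le_mul_of_nonneg_left h5 (norm_nonneg _)
    nlinarith [norm_nonneg δ]
  have h7 : ⟪gradf a - g, d⟫ = -⟪δ, d⟫ := by
    rw [hδ, ← inner_neg_left]
    congr 1
    abel
  have h8 : ⟪δ, a - xp⟫ = -⟪δ, d⟫ := by
    rw [← inner_neg_right]
    congr 1
    rw [hd]; abel
  -- norm rewrites
  have hnr : ‖t⁻¹ • (a - xp)‖ ^ 2 = ‖d‖ ^ 2 / t ^ 2 := by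
    rw [norm_smul, Real.norm_eq_abs, abs_of_pos (inv_pos.mpr ht), norm_sub_rev a xp, ← hd,
      mul_pow]
    field_simp
  have hni : t * ⟪δ, t⁻¹ • (a - xg)⟫ = ⟪δ, a - xg⟫ := by
    rw [real_inner_smul_right]
    field_simp
  rw [hnr, hni]
  -- combine everything
  have hLgd : f xp ≤ f a + ⟪gradf a, d⟫ + L_g / 2 * ‖d‖ ^ 2 := by linarith
  have hmain : f xp + h (c xp) ≤ f a + h (c a) + ⟪gradf a - g, d⟫ + L / 2 * ‖d‖ ^ 2
      - ‖d‖ ^ 2 / t := by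
    have hil : ⟪gradf a, d⟫ = ⟪g, d⟫ + ⟪gradf a - g, d⟫ := by
      rw [← inner_add_left]
      congr 1
      abel
    rw [hL]
    nlinarith [h1, h4, hLgd]
  rw [h7] at hmain
  rw [← h8] at hmain
  have hfin : (t - L * t ^ 2 / 2) * (‖d‖ ^ 2 / t ^ 2) = ‖d‖ ^ 2 / t - L / 2 * ‖d‖ ^ 2 := by
    field_simp
  rw [hfin]
  linarith
/-- key expectation bound for the stochastic approximation algorithm for
nonconvex stochastic composite optimization. With Φ_h = f + h∘c bounded below by Φ_h^low,
L = L_g + L_h·L_J, stepsizes γ_k ∈ (0, 2/L], iterates x_{k+1}(ω) = x⁺(x_k(ω), G_k(ω), γ_k)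
(x⁺(a,g,t) being the unique minimizer of ψ_t(a,g,·)), generalized gradients
g̃_k^r = P_{γ_k}(x_k, G_k) = (x_k − x_{k+1})/γ_k and
g̃_k = P_{γ_k}(x_k, ∇f(x_k)) = (x_k − x⁺(x_k, ∇f(x_k), γ_k))/γ_k, under
E[⟨G_k − ∇f(x_k), g̃_k⟩] = 0 and E[‖G_k − ∇f(x_k)‖²] ≤ σ²/m_k:
∑_{k=1}^N (γ_k − Lγ_k²/2)·E[‖g̃_k^r‖²] ≤ Φ_h(x₁) − Φ_h^low + σ²·∑_{k=1}^N γ_k/m_k. -/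
theorem stmt_0 {n q : ℕ} {Ω : Type*} [MeasureSpace Ω] [IsProbabilityMeasure (ℙ : Measure Ω)]
    (f : EuclideanSpace ℝ (Fin n) → ℝ)
    (gradf : EuclideanSpace ℝ (Fin n) → EuclideanSpace ℝ (Fin n))
    (c : EuclideanSpace ℝ (Fin n) → EuclideanSpace ℝ (Fin q))
    (J : EuclideanSpace ℝ (Fin n) → EuclideanSpace ℝ (Fin n) →L[ℝ] EuclideanSpace ℝ (Fin q))
    (h : EuclideanSpace ℝ (Fin q) → ℝ)
    (L_g L_h L_J L Φlow σ : ℝ)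
    (hLg : 0 < L_g) (hLh : 0 < L_h) (hLJ : 0 < L_J) (hσ : 0 < σ)
    (hL : L = L_g + L_h * L_J)
    (hf : ∀ z, HasGradientAt f (gradf z) z)
    (hgradLip : ∀ a b, ‖gradf a - gradf b‖ ≤ L_g * ‖a - b‖)
    (hc : ∀ z, HasFDerivAt c (J z) z)
    (hJLip : ∀ a b, ‖J a - J b‖ ≤ L_J * ‖a - b‖)
    (hconv : ConvexOn ℝ Set.univ h)
    (hhLip : ∀ a b, |h a - h b| ≤ L_h * ‖a - b‖)
    (hΦlow : ∀ y, Φlow ≤ f y + h (c y))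
    (N : ℕ) (hN : 1 ≤ N)
    (x₁ : EuclideanSpace ℝ (Fin n))
    (x G : ℕ → Ω → EuclideanSpace ℝ (Fin n))
    (γ m : ℕ → ℝ)
    (xplus : EuclideanSpace ℝ (Fin n) → EuclideanSpace ℝ (Fin n) → ℝ →
      EuclideanSpace ℝ (Fin n))
    -- x⁺(a, g, t) minimizes u ↦ ψ_t(a, g, u) (uniqueness is automatic by strong convexity):
    (hxplus : ∀ (a g : EuclideanSpace ℝ (Fin n)) (t : ℝ), 0 < t → ∀ u,
      ⟪g, xplus a g t - a⟫ + h (c a + J a (xplus a g t - a)) + ‖xplus a g t - a‖ ^ 2 / (2 * t) ≤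
        ⟪g, u - a⟫ + h (c a + J a (u - a)) + ‖u - a‖ ^ 2 / (2 * t))
    (hx₁ : ∀ ω, x 1 ω = x₁)
    (hrec : ∀ k ∈ Finset.Icc 1 N, ∀ ω, x (k + 1) ω = xplus (x k ω) (G k ω) (γ k))
    (hγ : ∀ k ∈ Finset.Icc 1 N, 0 < γ k ∧ γ k ≤ 2 / L)
    (hm : ∀ k ∈ Finset.Icc 1 N, 0 < m k)
    -- the G_k are square-integrable random vectors:
    (hG2 : ∀ k ∈ Finset.Icc 1 N, MemLp (G k) 2 ℙ)
    -- E[⟨G_k − ∇f(x_k), g̃_k⟩] = 0: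
    (hmean : ∀ k ∈ Finset.Icc 1 N,
      Integrable (fun ω => ⟪G k ω - gradf (x k ω),
          (γ k)⁻¹ • (x k ω - xplus (x k ω) (gradf (x k ω)) (γ k))⟫) ℙ ∧
        ∫ ω, ⟪G k ω - gradf (x k ω),
          (γ k)⁻¹ • (x k ω - xplus (x k ω) (gradf (x k ω)) (γ k))⟫ ∂ℙ = 0)
    -- E[‖G_k − ∇f(x_k)‖²] ≤ σ²/m_k:
    (hvar : ∀ k ∈ Finset.Icc 1 N,
      Integrable (fun ω => ‖G k ω - gradf (x k ω)‖ ^ 2) ℙ ∧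
        ∫ ω, ‖G k ω - gradf (x k ω)‖ ^ 2 ∂ℙ ≤ σ ^ 2 / m k) :
    ∑ k ∈ Finset.Icc 1 N, (γ k - L * γ k ^ 2 / 2) *
        ∫ ω, ‖(γ k)⁻¹ • (x k ω - x (k + 1) ω)‖ ^ 2 ∂ℙ ≤
      (f x₁ + h (c x₁)) - Φlow + σ ^ 2 * ∑ k ∈ Finset.Icc 1 N, γ k / m k := by
  classical
  have hL0 : 0 < L := by rw [hL]; positivity
  set Φ : EuclideanSpace ℝ (Fin n) → ℝ := fun y => f y + h (c y) with hΦ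
  set W : ℕ → Ω → ℝ := fun k ω => ‖(γ k)⁻¹ • (x k ω - x (k + 1) ω)‖ ^ 2 with hW
  set B : Ω → ℝ := fun ω => ∑ k ∈ Finset.Icc 1 N,
    (γ k * ⟪G k ω - gradf (x k ω),
        (γ k)⁻¹ • (x k ω - xplus (x k ω) (gradf (x k ω)) (γ k))⟫ +
      γ k * ‖G k ω - gradf (x k ω)‖ ^ 2) with hB
  -- coefficients are nonnegative
  have hcnn : ∀ k ∈ Finset.Icc 1 N, 0 ≤ γ k - L * γ k ^ 2 / 2 := by
    intro k hk
    obtain ⟨hγ0, hγ2⟩ := hγ k hk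
    have : L * γ k ≤ 2 := by
      rw [le_div_iff₀ hL0] at hγ2
      linarith
    nlinarith
  -- pointwise one-step inequality
  have hstep : ∀ k ∈ Finset.Icc 1 N, ∀ ω,
      (γ k - L * γ k ^ 2 / 2) * W k ω ≤ Φ (x k ω) - Φ (x (k + 1) ω) +
        (γ k * ⟪G k ω - gradf (x k ω),
            (γ k)⁻¹ • (x k ω - xplus (x k ω) (gradf (x k ω)) (γ k))⟫ +
          γ k * ‖G k ω - gradf (x k ω)‖ ^ 2) := by
    intro k hk ω
    obtain ⟨hγ0, _⟩ := hγ k hk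
    have hrw : x (k + 1) ω = xplus (x k ω) (G k ω) (γ k) := hrec k hk ω
    have := step_ineq f gradf c J h L_g L_h L_J L hLg hLh hLJ hL hf hgradLip hc hJLip
      hconv hhLip (x k ω) (G k ω) (γ k) hγ0
      (xplus (x k ω) (G k ω) (γ k)) (xplus (x k ω) (gradf (x k ω)) (γ k))
      (hxplus (x k ω) (G k ω) (γ k) hγ0) (hxplus (x k ω) (gradf (x k ω)) (γ k) hγ0)
    rw [hW, hΦ]
    dsimp only
    rw [hrw]
    linarith [this]
  -- pointwise summed inequality
  have hkey : ∀ ω, ∑ k ∈ Finset.Icc 1 N, (γ k - L * γ k ^ 2 / 2) * W k ω ≤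
      (f x₁ + h (c x₁)) - Φlow + B ω := by
    intro ω
    have hsum := Finset.sum_le_sum (fun k hk => hstep k hk ω)
    have htel : ∑ k ∈ Finset.Icc 1 N, (Φ (x k ω) - Φ (x (k + 1) ω))
        = Φ (x 1 ω) - Φ (x (N + 1) ω) := by
      have hIcc : Finset.Icc 1 N = Finset.Ico 1 (N + 1) := (Finset.Ico_add_one_right_eq_Icc 1 N).symm
      rw [hIcc, Finset.sum_Ico_eq_sum_range]
      have hNN : N + 1 - 1 = N := by omega
      rw [hNN, show N + 1 = 1 + N by omega]
      exact Finset.sum_range_sub' (fun i => Φ (x (1 + i) ω)) N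
    rw [Finset.sum_add_distrib, htel] at hsum
    have h1 : Φ (x 1 ω) = f x₁ + h (c x₁) := by rw [hΦ]; dsimp only; rw [hx₁ ω]
    have h2 : Φlow ≤ Φ (x (N + 1) ω) := hΦlow _
    calc ∑ k ∈ Finset.Icc 1 N, (γ k - L * γ k ^ 2 / 2) * W k ω
        ≤ Φ (x 1 ω) - Φ (x (N + 1) ω) + B ω := by rw [hB]; exact hsum
      _ ≤ (f x₁ + h (c x₁)) - Φlow + B ω := by rw [h1]; linarith [h2]
  -- integrability of B
  have hint : ∀ k ∈ Finset.Icc 1 N, Integrable (fun ω =>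
      γ k * ⟪G k ω - gradf (x k ω),
          (γ k)⁻¹ • (x k ω - xplus (x k ω) (gradf (x k ω)) (γ k))⟫ +
        γ k * ‖G k ω - gradf (x k ω)‖ ^ 2) ℙ := by
    intro k hk
    exact ((hmean k hk).1.const_mul (γ k)).add ((hvar k hk).1.const_mul (γ k))
  have hBint : Integrable B ℙ := by
    rw [hB]
    exact integrable_finset_sum _ hint
  -- expectation of B
  have hBexp : ∫ ω, B ω ∂ℙ ≤ σ ^ 2 * ∑ k ∈ Finset.Icc 1 N, γ k / m k := by
    rw [hB]
    rw [integral_finset_sum _ hint]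
    rw [Finset.mul_sum]
    apply Finset.sum_le_sum
    intro k hk
    rw [integral_add ((hmean k hk).1.const_mul (γ k)) ((hvar k hk).1.const_mul (γ k)),
      integral_const_mul, integral_const_mul, (hmean k hk).2, mul_zero, zero_add]
    obtain ⟨hγ0, _⟩ := hγ k hk
    calc γ k * ∫ ω, ‖G k ω - gradf (x k ω)‖ ^ 2 ∂ℙ ≤ γ k * (σ ^ 2 / m k) :=
          mul_le_mul_of_nonneg_left (hvar k hk).2 (le_of_lt hγ0)
      _ = σ ^ 2 * (γ k / m k) := by ring
  -- split off the non-integrable (hence zero-integral) terms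
  set S : Finset ℕ := (Finset.Icc 1 N).filter (fun k => Integrable (W k) ℙ) with hS
  have hzero : ∀ k ∈ Finset.Icc 1 N, k ∉ S → (∫ ω, W k ω ∂ℙ) = 0 := by
    intro k hk hkS
    apply integral_undef
    intro hint
    exact hkS (Finset.mem_filter.mpr ⟨hk, hint⟩)
  have hsum_eq : ∑ k ∈ Finset.Icc 1 N, (γ k - L * γ k ^ 2 / 2) * ∫ ω, W k ω ∂ℙ
      = ∑ k ∈ S, (γ k - L * γ k ^ 2 / 2) * ∫ ω, W k ω ∂ℙ := by
    symm
    apply Finset.sum_subset (Finset.filter_subset _ _)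
    intro k hk hkS
    rw [hzero k hk hkS, mul_zero]
  have hWnn : ∀ k, ∀ ω, 0 ≤ W k ω := fun k ω => by rw [hW]; positivity
  have hSint : ∀ k ∈ S, Integrable (fun ω => (γ k - L * γ k ^ 2 / 2) * W k ω) ℙ := by
    intro k hk
    exact ((Finset.mem_filter.mp hk).2).const_mul _
  have hRint : Integrable (fun ω => (f x₁ + h (c x₁)) - Φlow + B ω) ℙ :=
    (integrable_const _).add hBint
  have hmono : ∫ ω, ∑ k ∈ S, (γ k - L * γ k ^ 2 / 2) * W k ω ∂ℙ ≤
      ∫ ω, ((f x₁ + h (c x₁)) - Φlow + B ω) ∂ℙ := by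
    apply integral_mono (integrable_finset_sum _ hSint) hRint
    intro ω
    calc ∑ k ∈ S, (γ k - L * γ k ^ 2 / 2) * W k ω
        ≤ ∑ k ∈ Finset.Icc 1 N, (γ k - L * γ k ^ 2 / 2) * W k ω := by
          apply Finset.sum_le_sum_of_subset_of_nonneg (Finset.filter_subset _ _)
          intro k hk _
          exact mul_nonneg (hcnn k hk) (hWnn k ω)
      _ ≤ (f x₁ + h (c x₁)) - Φlow + B ω := hkey ω
  have hRexp : ∫ ω, ((f x₁ + h (c x₁)) - Φlow + B ω) ∂ℙ ≤
      (f x₁ + h (c x₁)) - Φlow + σ ^ 2 * ∑ k ∈ Finset.Icc 1 N, γ k / m k := by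
    rw [integral_add (integrable_const _) hBint, integral_const]
    simp only [probReal_univ, measure_univ, ENNReal.toReal_one, smul_eq_mul, one_mul]
    linarith
  calc ∑ k ∈ Finset.Icc 1 N, (γ k - L * γ k ^ 2 / 2) * ∫ ω, W k ω ∂ℙ
      = ∑ k ∈ S, (γ k - L * γ k ^ 2 / 2) * ∫ ω, W k ω ∂ℙ := hsum_eq
    _ = ∑ k ∈ S, ∫ ω, (γ k - L * γ k ^ 2 / 2) * W k ω ∂ℙ := by
        apply Finset.sum_congr rfl
        intro k hk
        exact (integral_const_mul _ _).symm
    _ = ∫ ω, ∑ k ∈ S, (γ k - L * γ k ^ 2 / 2) * W k ω ∂ℙ :=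
        (integral_finset_sum _ hSint).symm
    _ ≤ ∫ ω, ((f x₁ + h (c x₁)) - Φlow + B ω) ∂ℙ := hmono
    _ ≤ (f x₁ + h (c x₁)) - Φlow + σ ^ 2 * ∑ k ∈ Finset.Icc 1 N, γ k / m k := hRexp
end

section
/- Let ε, σ, L, D, D̃ be positive reals and set C₁ := σ²/D̃, C₂ := 8σ/√D̃, C₃ := 6σ√D̃. Let N̄ be a positive integer satisfying N̄ ≥ max{ (D·C₂ + L·C₃)²/ε² + 32·L·D/ε , C₁/L² }, and let m := ⌈ min{ N̄, max{ 1, (σ/L)·√(N̄/D̃) } } ⌉. Then 8·L·D·m/N̄ + 6σ²/m ≤ ε. In particular, since the number of iterations N := ⌈N̄/m⌉ satisfies N ≥ N̄/(2m), also 4·L·D/N + 6σ²/m ≤ ε. -/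
set_option maxHeartbeats 1000000 in
/-- arithmetic core of the SFO-call complexity bound. -/
theorem stmt_1 (ε σ L D Dtilde : ℝ) (hε : 0 < ε) (hσ : 0 < σ) (hL : 0 < L) (hD : 0 < D)
    (hDtilde : 0 < Dtilde) (C₁ C₂ C₃ : ℝ)
    (hC₁ : C₁ = σ ^ 2 / Dtilde) (hC₂ : C₂ = 8 * σ / Real.sqrt Dtilde) (hC₃ : C₃ = 6 * σ * Real.sqrt Dtilde)
    (Nbar : ℕ) (hNbarpos : 0 < Nbar)
    (hNbar : (Nbar : ℝ) ≥ max ((D * C₂ + L * C₃) ^ 2 / ε ^ 2 + 32 * L * D / ε) (C₁ / L ^ 2))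
    (m : ℕ) (hm : m = ⌈min (Nbar : ℝ) (max 1 (σ / L * Real.sqrt ((Nbar : ℝ) / Dtilde)))⌉₊)
    (N : ℕ) (hN : N = ⌈(Nbar : ℝ) / (m : ℝ)⌉₊) :
    8 * L * D * (m : ℝ) / (Nbar : ℝ) + 6 * σ ^ 2 / (m : ℝ) ≤ ε ∧
      (N : ℝ) ≥ (Nbar : ℝ) / (2 * (m : ℝ)) ∧
      4 * L * D / (N : ℝ) + 6 * σ ^ 2 / (m : ℝ) ≤ ε := by
  have hN0 : (0:ℝ) < Nbar := by exact_mod_cast hNbarpos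
  have hN1 : (1:ℝ) ≤ Nbar := by exact_mod_cast hNbarpos
  set d := Real.sqrt Dtilde with hdd
  have hd0 : (0:ℝ) < d := Real.sqrt_pos.mpr hDtilde
  have hd2 : d ^ 2 = Dtilde := Real.sq_sqrt hDtilde.le
  have hd2pos : (0:ℝ) < d ^ 2 := by positivity
  set r := Real.sqrt ((Nbar:ℝ)) with hrr
  have hr0 : (0:ℝ) < r := Real.sqrt_pos.mpr hN0
  have hr2 : r ^ 2 = (Nbar:ℝ) := Real.sq_sqrt hN0.le
  have hsqrt : Real.sqrt ((Nbar:ℝ)/Dtilde) = r / d := Real.sqrt_div hN0.le _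
  set t := σ * r / (L * d) with htt
  have ht : σ / L * Real.sqrt ((Nbar:ℝ)/Dtilde) = t := by
    rw [hsqrt, htt]; field_simp
  have ht0 : (0:ℝ) < t := by positivity
  have ht_eq : σ * r = t * (L * d) := by
    rw [htt]; field_simp
  -- from the C₁ bound : σ ≤ r * d * L
  have hσ2 : σ ^ 2 ≤ (Nbar:ℝ) * (Dtilde * L ^ 2) := by
    have h1 : C₁ / L ^ 2 ≤ (Nbar:ℝ) := le_trans (le_max_right _ _) hNbar
    rw [hC₁, div_div] at h1
    exact (div_le_iff₀ (by positivity)).mp h1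
  have hσ2' : σ ^ 2 ≤ (r * d * L) ^ 2 := by
    have : (r * d * L) ^ 2 = (Nbar:ℝ) * (Dtilde * L ^ 2) := by
      rw [← hr2, ← hd2]; ring
    linarith
  have hσrdL : σ ≤ r * d * L := by
    have h := Real.sqrt_le_sqrt hσ2'
    rwa [Real.sqrt_sq hσ.le, Real.sqrt_sq (by positivity)] at h
  have ht_le : t ≤ (Nbar:ℝ) := by
    rw [htt, div_le_iff₀ (by positivity)]
    have h1 := mul_le_mul_of_nonneg_right hσrdL hr0.le
    have h2 : r * d * L * r = (Nbar:ℝ) * (L * d) := by rw [← hr2]; ring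
    linarith
  have hme : min (Nbar:ℝ) (max 1 (σ / L * Real.sqrt ((Nbar:ℝ)/Dtilde))) = max 1 t := by
    rw [ht, min_eq_right (max_le hN1 ht_le)]
  rw [hme] at hm
  have hm_ge : max 1 t ≤ (m:ℝ) := hm ▸ Nat.le_ceil _
  have hm_lt : (m:ℝ) < max 1 t + 1 := hm ▸ Nat.ceil_lt_add_one (by positivity)
  have hm1 : (1:ℝ) ≤ (m:ℝ) := le_trans (le_max_left _ _) hm_ge
  have hmt : t ≤ (m:ℝ) := le_trans (le_max_right _ _) hm_ge
  have hm2 : (m:ℝ) ≤ t + 2 := by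
    have : max 1 t ≤ t + 1 := max_le (by linarith) (by linarith)
    linarith
  have hm0 : (0:ℝ) < (m:ℝ) := lt_of_lt_of_le one_pos hm1
  -- main key inequality
  have hAd : (D * C₂ + L * C₃) * d = 8 * D * σ + 6 * σ * L * d ^ 2 := by
    rw [hC₂, hC₃]; field_simp
  have hkey : (D * C₂ + L * C₃) ^ 2 + 32 * L * D * ε ≤ ε ^ 2 * r ^ 2 := by
    have h := le_trans (le_max_left _ _) hNbar
    have h2 := mul_le_mul_of_nonneg_right h (sq_nonneg ε)
    calc (D * C₂ + L * C₃) ^ 2 + 32 * L * D * ε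
        = ((D * C₂ + L * C₃) ^ 2 / ε ^ 2 + 32 * L * D / ε) * ε ^ 2 := by
          field_simp
      _ ≤ (Nbar:ℝ) * ε ^ 2 := h2
      _ = ε ^ 2 * r ^ 2 := by rw [hr2]; ring
  have hsq : 2 * ε * ((D * C₂ + L * C₃) * r) ≤ ε ^ 2 * r ^ 2 + (D * C₂ + L * C₃) ^ 2 := by
    have h := sq_nonneg (ε * r - (D * C₂ + L * C₃))
    nlinarith [h]
  have hAr : (D * C₂ + L * C₃) * r + 16 * L * D ≤ ε * r ^ 2 := by
    have h2e : 2 * ε * ((D * C₂ + L * C₃) * r + 16 * L * D) ≤ 2 * ε * (ε * r ^ 2) := by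
      nlinarith [hsq, hkey]
    exact (mul_le_mul_iff_right₀ (by positivity : (0:ℝ) < 2 * ε)).mp h2e
  have hexp : (D * C₂ + L * C₃) * r * d ^ 2 = (8 * L * D * t + 6 * σ * L * d * r) * d ^ 2 := by
    calc (D * C₂ + L * C₃) * r * d ^ 2
        = ((D * C₂ + L * C₃) * d) * r * d := by ring
      _ = (8 * D * σ + 6 * σ * L * d ^ 2) * r * d := by rw [hAd]
      _ = 8 * D * (σ * r) * d + 6 * σ * L * d ^ 2 * r * d := by ring
      _ = 8 * D * (t * (L * d)) * d + 6 * σ * L * d ^ 2 * r * d := by rw [ht_eq]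
      _ = (8 * L * D * t + 6 * σ * L * d * r) * d ^ 2 := by ring
  have h5 : 8 * L * D * t + 16 * L * D + 6 * σ * L * d * r ≤ ε * r ^ 2 := by
    rw [← mul_le_mul_iff_left₀ hd2pos]
    have h3 := mul_le_mul_of_nonneg_right hAr hd2pos.le
    have h4 : ((D * C₂ + L * C₃) * r + 16 * L * D) * d ^ 2
        = (8 * L * D * t + 6 * σ * L * d * r) * d ^ 2 + 16 * L * D * d ^ 2 := by
      rw [← hexp]; ring
    linarith
  have hbr : (0:ℝ) ≤ ε * r ^ 2 - 8 * L * D * t - 16 * L * D - 6 * σ * L * d * r := by linarith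
  have h6 : 0 ≤ ((m:ℝ) - t) * (ε * r ^ 2 - 8 * L * D * t - 16 * L * D - 6 * σ * L * d * r) :=
    mul_nonneg (by linarith) hbr
  have h7 : 0 ≤ 8 * L * D * (m:ℝ) * (t + 2 - (m:ℝ)) :=
    mul_nonneg (by positivity) (by linarith)
  have h8 : 0 ≤ 6 * σ * L * d * r * ((m:ℝ) - t) :=
    mul_nonneg (by positivity) (by linarith)
  have h9 : 0 ≤ t * (ε * r ^ 2 - 8 * L * D * t - 16 * L * D - 6 * σ * L * d * r) :=
    mul_nonneg ht0.le hbr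
  have heq : σ * L * d * r * t = σ ^ 2 * r ^ 2 := by
    calc σ * L * d * r * t = (σ * r) * (t * (L * d)) := by ring
      _ = (σ * r) * (σ * r) := by rw [← ht_eq]
      _ = σ ^ 2 * r ^ 2 := by ring
  have hfirst : 8 * L * D * (m:ℝ) / (Nbar:ℝ) + 6 * σ ^ 2 / (m:ℝ) ≤ ε := by
    rw [div_add_div _ _ (ne_of_gt hN0) (ne_of_gt hm0), div_le_iff₀ (by positivity), ← hr2]
    have hsum : (0:ℝ) ≤ ((m:ℝ) - t) * (ε * r ^ 2 - 8 * L * D * t - 16 * L * D - 6 * σ * L * d * r)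
        + 8 * L * D * (m:ℝ) * (t + 2 - (m:ℝ)) + 6 * σ * L * d * r * ((m:ℝ) - t)
        + t * (ε * r ^ 2 - 8 * L * D * t - 16 * L * D - 6 * σ * L * d * r) :=
      add_nonneg (add_nonneg (add_nonneg h6 h7) h8) h9
    have hid : ((m:ℝ) - t) * (ε * r ^ 2 - 8 * L * D * t - 16 * L * D - 6 * σ * L * d * r)
        + 8 * L * D * (m:ℝ) * (t + 2 - (m:ℝ)) + 6 * σ * L * d * r * ((m:ℝ) - t)
        + t * (ε * r ^ 2 - 8 * L * D * t - 16 * L * D - 6 * σ * L * d * r)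
        = ε * (r ^ 2 * (m:ℝ)) - 8 * L * D * (m:ℝ) * (m:ℝ) - 6 * (σ * L * d * r * t) := by
      ring
    rw [hid] at hsum
    linarith [hsum, heq]
  refine ⟨hfirst, ?_, ?_⟩
  · have hNle : (Nbar:ℝ) / (m:ℝ) ≤ (N:ℝ) := hN ▸ Nat.le_ceil _
    have hq0 : (0:ℝ) ≤ (Nbar:ℝ) / (m:ℝ) := by positivity
    have hhalf : (Nbar:ℝ) / (2 * (m:ℝ)) = (Nbar:ℝ) / (m:ℝ) / 2 := by
      rw [div_div, mul_comm]
    rw [ge_iff_le, hhalf]; linarith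
  · have hNle : (Nbar:ℝ) / (m:ℝ) ≤ (N:ℝ) := hN ▸ Nat.le_ceil _
    have hge : (Nbar:ℝ) / (2 * (m:ℝ)) ≤ (N:ℝ) := by
      have hhalf : (Nbar:ℝ) / (2 * (m:ℝ)) = (Nbar:ℝ) / (m:ℝ) / 2 := by rw [div_div, mul_comm]
      have hq0 : (0:ℝ) ≤ (Nbar:ℝ) / (m:ℝ) := by positivity
      rw [hhalf]; linarith
    have hNpos : (0:ℝ) < (N:ℝ) := lt_of_lt_of_le (by positivity) hge
    have h41 : 4 * L * D / (N:ℝ) ≤ 4 * L * D / ((Nbar:ℝ) / (2 * (m:ℝ))) :=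
      div_le_div_of_nonneg_left (by positivity) (by positivity) hge
    have h42 : 4 * L * D / ((Nbar:ℝ) / (2 * (m:ℝ))) = 8 * L * D * (m:ℝ) / (Nbar:ℝ) := by
      rw [div_div_eq_mul_div]; ring_nf
    rw [h42] at h41
    linarith
end

section
/- For every x, g ∈ ℝ^n and γ > 0: ⟨g, P_γ(x, g)⟩ ≥ (1 − (γ·L_h·L_J)/2)·‖P_γ(x, g)‖² + (1/γ)·( h(c(x⁺)) − h(c(x)) ), where x⁺ = x⁺(x, g, γ). -/
open scoped RealInnerProductSpace
open Set

lemma quad_bound {n q : ℕ}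
    (c : EuclideanSpace ℝ (Fin n) → EuclideanSpace ℝ (Fin q))
    (J : EuclideanSpace ℝ (Fin n) → EuclideanSpace ℝ (Fin n) →L[ℝ] EuclideanSpace ℝ (Fin q))
    (L_J : ℝ)
    (hc : ∀ z, HasFDerivAt c (J z) z)
    (hJLip : ∀ a b, ‖J a - J b‖ ≤ L_J * ‖a - b‖)
    (a b : EuclideanSpace ℝ (Fin n)) :
    ‖c b - c a - J a (b - a)‖ ≤ L_J / 2 * ‖b - a‖ ^ 2 := by
  set v := b - a with hv
  set f : ℝ → EuclideanSpace ℝ (Fin q) := fun t => c (a + t • v) - c a - t • (J a v) with hf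
  set f' : ℝ → EuclideanSpace ℝ (Fin q) := fun t => J (a + t • v) v - J a v with hf'
  have hder : ∀ t : ℝ, HasDerivAt f (f' t) t := by
    intro t
    have hcurve : HasDerivAt (fun t : ℝ => a + t • v) v t := by
      simpa using ((hasDerivAt_id t).smul_const v).const_add a
    have h1 : HasDerivAt (fun t : ℝ => c (a + t • v)) (J (a + t • v) v) t :=
      (hc (a + t • v)).comp_hasDerivAt t hcurve
    have h2 : HasDerivAt (fun t : ℝ => t • (J a v)) (J a v) t := by
      simpa using (hasDerivAt_id t).smul_const (J a v)
    exact (h1.sub_const (c a)).sub h2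
  have key : ∀ s ∈ Icc (0:ℝ) 1, ‖f s‖ ≤ L_J * ‖v‖ ^ 2 / 2 * s ^ 2 := by
    have hB : ∀ t : ℝ, HasDerivAt (fun s => L_J * ‖v‖ ^ 2 / 2 * s ^ 2) (L_J * ‖v‖ ^ 2 * t) t := by
      intro t
      have := (hasDerivAt_pow 2 t).const_mul (L_J * ‖v‖ ^ 2 / 2)
      refine this.congr_deriv ?_
      ring
    refine image_norm_le_of_norm_deriv_right_le_deriv_boundary
      (fun t _ => (hder t).continuousAt.continuousWithinAt)
      (fun t _ => (hder t).hasDerivWithinAt) ?_ hB ?_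
    · simp [hf]
    · intro t ht
      have h1 : ‖f' t‖ ≤ ‖J (a + t • v) - J a‖ * ‖v‖ := by
        have := (J (a + t • v) - J a).le_opNorm v
        simpa [hf'] using this
      have h2 : ‖J (a + t • v) - J a‖ ≤ L_J * (t * ‖v‖) := by
        have := hJLip (a + t • v) a
        simpa [norm_smul, abs_of_nonneg ht.1] using this
      calc ‖f' t‖ ≤ L_J * (t * ‖v‖) * ‖v‖ := h1.trans (by
            apply mul_le_mul_of_nonneg_right h2 (norm_nonneg _))
        _ = L_J * ‖v‖ ^ 2 * t := by ring
  have h1 := key 1 (by norm_num)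
  have : f 1 = c b - c a - J a v := by simp [hf, hv]
  rw [this] at h1
  calc ‖c b - c a - J a (b - a)‖ ≤ L_J * ‖v‖ ^ 2 / 2 * 1 ^ 2 := h1
    _ = L_J / 2 * ‖b - a‖ ^ 2 := by rw [← hv]; ring

set_option maxHeartbeats 1000000 in
/-- For every x, g ∈ ℝ^n and γ > 0:
⟨g, P_γ(x,g)⟩ ≥ (1 − γL_hL_J/2)‖P_γ(x,g)‖² + (1/γ)(h(c(x⁺)) − h(c(x))),
where x⁺ is the (unique) global minimizer of u ↦ ψ_γ(x, g, u) and
P_γ(x,g) = (x − x⁺)/γ. -/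
theorem stmt_3 {n q : ℕ}
    (c : EuclideanSpace ℝ (Fin n) → EuclideanSpace ℝ (Fin q))
    (J : EuclideanSpace ℝ (Fin n) → EuclideanSpace ℝ (Fin n) →L[ℝ] EuclideanSpace ℝ (Fin q))
    (h : EuclideanSpace ℝ (Fin q) → ℝ)
    (L_J L_h : ℝ) (hLJ : 0 < L_J) (hLh : 0 < L_h)
    (hc : ∀ z, HasFDerivAt c (J z) z)
    (hJLip : ∀ a b, ‖J a - J b‖ ≤ L_J * ‖a - b‖)
    (hconv : ConvexOn ℝ Set.univ h)
    (hhLip : ∀ a b, |h a - h b| ≤ L_h * ‖a - b‖)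
    (x g : EuclideanSpace ℝ (Fin n)) (γ : ℝ) (hγ : 0 < γ)
    (xplus : EuclideanSpace ℝ (Fin n))
    (hmin : ∀ u, ⟪g, xplus - x⟫ + h (c x + J x (xplus - x)) + ‖xplus - x‖ ^ 2 / (2 * γ) ≤
      ⟪g, u - x⟫ + h (c x + J x (u - x)) + ‖u - x‖ ^ 2 / (2 * γ)) :
    ⟪g, γ⁻¹ • (x - xplus)⟫ ≥
      (1 - γ * L_h * L_J / 2) * ‖γ⁻¹ • (x - xplus)‖ ^ 2 +
        (1 / γ) * (h (c xplus) - h (c x)) := by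
  set v := xplus - x with hv
  set A := ⟪g, v⟫ with hA
  set H1 := h (c x + J x v) with hH1
  set H0 := h (c x) with hH0
  set H2 := h (c xplus) with hH2
  set N := ‖v‖ ^ 2 with hN
  have hN0 : 0 ≤ N := by positivity
  -- strong optimality: A + H1 + N / γ ≤ H0
  have T : A + H1 + N / γ ≤ H0 := by
    refine le_of_forall_sub_le ?_
    intro ε hε
    set t : ℝ := min 1 (2 * γ * ε / (N + 1)) with ht
    have htpos : 0 < t := lt_min one_pos (by positivity)
    have htle1 : t ≤ 1 := min_le_left _ _
    -- plug u = x + (1 - t) • v into hmin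
    have hmu := hmin (x + (1 - t) • v)
    have humx : x + (1 - t) • v - x = (1 - t) • v := by abel
    rw [humx] at hmu
    have hinner : ⟪g, (1 - t) • v⟫ = (1 - t) * A := real_inner_smul_right _ _ _
    have hnorm : ‖(1 - t) • v‖ ^ 2 = (1 - t) ^ 2 * N := by
      rw [norm_smul, mul_pow, Real.norm_eq_abs, sq_abs]
    have hJsmul : c x + J x ((1 - t) • v) = (1 - t) • (c x + J x v) + t • (c x) := by
      rw [map_smul]
      module
    have hcvx : h ((1 - t) • (c x + J x v) + t • (c x)) ≤ (1 - t) * H1 + t * H0 :=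
      hconv.2 (Set.mem_univ _) (Set.mem_univ _) (by linarith) htpos.le (by ring)
    rw [hinner, hnorm, hJsmul] at hmu
    set D := N / (2 * γ) with hD
    have hsum : A + H1 + D ≤ (1 - t) * A + ((1 - t) * H1 + t * H0) + (1 - t) ^ 2 * D := by
      have : (1 - t) ^ 2 * N / (2 * γ) = (1 - t) ^ 2 * D := by rw [hD]; ring
      rw [this] at hmu
      linarith [hmu.trans (by linarith : (1 - t) * A + h ((1 - t) • (c x + J x v) + t • c x) +
        (1 - t) ^ 2 * D ≤ (1 - t) * A + ((1 - t) * H1 + t * H0) + (1 - t) ^ 2 * D)]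
    have h3 : t * (A + H1 + (2 - t) * D) ≤ t * H0 := by nlinarith [hsum]
    have step : A + H1 + (2 - t) * D ≤ H0 := le_of_mul_le_mul_left h3 htpos
    have htb : t * N / (2 * γ) ≤ ε := by
      have h1 : t ≤ 2 * γ * ε / (N + 1) := min_le_right _ _
      have h2 : t * N ≤ (2 * γ * ε / (N + 1)) * N :=
        mul_le_mul_of_nonneg_right h1 hN0
      rw [div_le_iff₀ (by positivity)]
      calc t * N ≤ (2 * γ * ε / (N + 1)) * N := h2
        _ ≤ ε * (2 * γ) := by
          rw [div_mul_eq_mul_div, div_le_iff₀ (by positivity)]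
          nlinarith
    have hrest : N / γ - (2 - t) * D = t * N / (2 * γ) := by
      simp only [hD, div_eq_mul_inv, mul_inv]; ring
    linarith
  -- Lipschitz + quadratic bound: H2 ≤ H1 + L_h * (L_J / 2 * N)
  have S2 : H2 ≤ H1 + L_h * (L_J / 2 * N) := by
    have hq := quad_bound c J L_J hc hJLip x xplus
    have habs := hhLip (c xplus) (c x + J x v)
    have hdiff : c xplus - (c x + J x v) = c xplus - c x - J x (xplus - x) := by
      rw [← hv]; abel
    have h1 : H2 - H1 ≤ L_h * ‖c xplus - (c x + J x v)‖ := (le_abs_self _).trans habs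
    have h2 : ‖c xplus - (c x + J x v)‖ ≤ L_J / 2 * N := by
      rw [hdiff, hN, hv]; exact hq
    linarith [mul_le_mul_of_nonneg_left h2 hLh.le]
  -- final arithmetic
  have hIP : ⟪g, γ⁻¹ • (x - xplus)⟫ = -(γ⁻¹ * A) := by
    rw [real_inner_smul_right]
    have : (x - xplus) = -v := by rw [hv]; abel
    rw [this, inner_neg_right, ← hA]
    ring
  have hNP : ‖γ⁻¹ • (x - xplus)‖ ^ 2 = γ⁻¹ ^ 2 * N := by
    rw [norm_smul, mul_pow, Real.norm_eq_abs, sq_abs]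
    congr 1
    rw [hN, hv, show x - xplus = -(xplus - x) by abel, norm_neg]
  rw [ge_iff_le, hIP, hNP]
  have hTγ : γ⁻¹ * (A + H1 + N / γ) ≤ γ⁻¹ * H0 :=
    mul_le_mul_of_nonneg_left T (inv_pos.2 hγ).le
  have hS2γ : (1/γ) * H2 ≤ (1/γ) * (H1 + L_h * (L_J / 2 * N)) :=
    mul_le_mul_of_nonneg_left S2 (by positivity)
  have hT2 : γ⁻¹ * A + γ⁻¹ * H1 + γ⁻¹ ^ 2 * N ≤ γ⁻¹ * H0 := by
    have e : γ⁻¹ * (A + H1 + N / γ) = γ⁻¹ * A + γ⁻¹ * H1 + γ⁻¹ ^ 2 * N := by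
      rw [div_eq_mul_inv]; ring
    linarith [e ▸ hTγ]
  have hS3 : γ⁻¹ * H2 ≤ γ⁻¹ * H1 + L_h * L_J / 2 * N * γ⁻¹ := by
    rw [one_div] at hS2γ
    have e : γ⁻¹ * (H1 + L_h * (L_J / 2 * N)) = γ⁻¹ * H1 + L_h * L_J / 2 * N * γ⁻¹ := by ring
    linarith [e ▸ hS2γ]
  have e1 : (1 - γ * L_h * L_J / 2) * (γ⁻¹ ^ 2 * N) = γ⁻¹ ^ 2 * N - L_h * L_J / 2 * N * γ⁻¹ := by
    have hcan : γ * γ⁻¹ = 1 := mul_inv_cancel₀ hγ.ne'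
    linear_combination (-(L_h * L_J / 2 * N * γ⁻¹)) * hcan
  rw [e1, one_div, mul_sub]
  linarith [hT2, hS3]
end

section
/- For every x ∈ ℝ^n, γ > 0 and g₁, g₂ ∈ ℝ^n: ‖x⁺(x, g₁, γ) − x⁺(x, g₂, γ)‖ ≤ γ·‖g₁ − g₂‖; equivalently, the map g ↦ P_γ(x, g) is Lipschitz continuous with constant 1, i.e. ‖P_γ(x, g₁) − P_γ(x, g₂)‖ ≤ ‖g₁ − g₂‖. -/
open scoped RealInnerProductSpace

lemma quad_ident {n : ℕ} (a b : EuclideanSpace ℝ (Fin n)) (t : ℝ) :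
    ‖(1 - t) • a + t • b‖ ^ 2 =
      (1 - t) * ‖a‖ ^ 2 + t * ‖b‖ ^ 2 - t * (1 - t) * ‖a - b‖ ^ 2 := by
  simp only [← real_inner_self_eq_norm_sq, inner_add_left, inner_add_right,
    inner_sub_left, inner_sub_right, real_inner_smul_left, real_inner_smul_right,
    real_inner_comm a b]
  ring

lemma strong_min_s4 {n q : ℕ}
    (c : EuclideanSpace ℝ (Fin n) → EuclideanSpace ℝ (Fin q))
    (J : EuclideanSpace ℝ (Fin n) → EuclideanSpace ℝ (Fin n) →L[ℝ] EuclideanSpace ℝ (Fin q))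
    (h : EuclideanSpace ℝ (Fin q) → ℝ)
    (hconv : ConvexOn ℝ Set.univ h)
    (x g : EuclideanSpace ℝ (Fin n)) (γ : ℝ) (hγ : 0 < γ)
    (xp : EuclideanSpace ℝ (Fin n))
    (hmin : ∀ u, ⟪g, xp - x⟫ + h (c x + J x (xp - x)) + ‖xp - x‖ ^ 2 / (2 * γ) ≤
      ⟪g, u - x⟫ + h (c x + J x (u - x)) + ‖u - x‖ ^ 2 / (2 * γ)) :
    ∀ u, ⟪g, xp - x⟫ + h (c x + J x (xp - x)) + ‖xp - x‖ ^ 2 / (2 * γ)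
        + ‖u - xp‖ ^ 2 / (2 * γ) ≤
      ⟪g, u - x⟫ + h (c x + J x (u - x)) + ‖u - x‖ ^ 2 / (2 * γ) := by
  intro u
  set D := ‖u - xp‖ ^ 2 / (2 * γ) with hD
  set ψp := ⟪g, xp - x⟫ + h (c x + J x (xp - x)) + ‖xp - x‖ ^ 2 / (2 * γ) with hψp
  set ψu := ⟪g, u - x⟫ + h (c x + J x (u - x)) + ‖u - x‖ ^ 2 / (2 * γ) with hψu
  have key : ∀ t : ℝ, 0 < t → t ≤ 1 → ψp + (1 - t) * D ≤ ψu := by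
    intro t ht0 ht1
    set v := (1 - t) • xp + t • u with hv
    have hvx : v - x = (1 - t) • (xp - x) + t • (u - x) := by
      rw [hv]; module
    have hinner : ⟪g, v - x⟫ = (1 - t) * ⟪g, xp - x⟫ + t * ⟪g, u - x⟫ := by
      rw [hvx, inner_add_right, real_inner_smul_right, real_inner_smul_right]
    have hJ : c x + J x (v - x) = (1 - t) • (c x + J x (xp - x)) + t • (c x + J x (u - x)) := by
      rw [hvx, map_add, map_smul, map_smul, smul_add, smul_add]
      have h1 : (1 - t) • c x + t • c x = c x := by
        rw [← add_smul]; simp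
      rw [show (1 - t) • c x + (1 - t) • (J x) (xp - x) + (t • c x + t • (J x) (u - x))
          = ((1 - t) • c x + t • c x) + ((1 - t) • (J x) (xp - x) + t • (J x) (u - x)) by abel,
        h1]
    have hh : h (c x + J x (v - x)) ≤
        (1 - t) * h (c x + J x (xp - x)) + t * h (c x + J x (u - x)) := by
      rw [hJ]
      exact hconv.2 (Set.mem_univ _) (Set.mem_univ _) (by linarith) (le_of_lt ht0) (by ring)
    have hq : ‖v - x‖ ^ 2 = (1 - t) * ‖xp - x‖ ^ 2 + t * ‖u - x‖ ^ 2
        - t * (1 - t) * ‖u - xp‖ ^ 2 := by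
      rw [hvx, quad_ident, show xp - x - (u - x) = -(u - xp) by abel, norm_neg]
    have h2γ : (0:ℝ) < 2 * γ := by linarith
    have hq' : ‖v - x‖ ^ 2 / (2 * γ) = (1 - t) * (‖xp - x‖ ^ 2 / (2 * γ))
        + t * (‖u - x‖ ^ 2 / (2 * γ)) - t * (1 - t) * D := by
      rw [hD, hq]; field_simp
    have hm := hmin v
    rw [hinner] at hm
    have hcomb : ψp ≤ (1 - t) * ψp + t * ψu - t * (1 - t) * D := by
      rw [hψp, hψu]
      linarith [hm, hh, hq']
    have h3 : t * (ψp + (1 - t) * D) ≤ t * ψu := by nlinarith [hcomb]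
    exact le_of_mul_le_mul_left h3 ht0
  refine le_of_forall_pos_le_add ?_
  intro ε hε
  have hD0 : 0 ≤ D := by rw [hD]; positivity
  rcases eq_or_lt_of_le hD0 with hD0' | hD0'
  · have := key 1 one_pos le_rfl
    linarith
  · set t := min 1 (ε / D) with ht
    have ht0 : 0 < t := lt_min one_pos (div_pos hε hD0')
    have ht1 : t ≤ 1 := min_le_left _ _
    have htD : t * D ≤ ε := by
      calc t * D ≤ (ε / D) * D :=
            mul_le_mul_of_nonneg_right (min_le_right _ _) (le_of_lt hD0')
        _ = ε := by field_simp
    have := key t ht0 ht1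
    nlinarith

/-- For every x ∈ ℝ^n, γ > 0 and g₁, g₂ ∈ ℝ^n:
‖x⁺(x,g₁,γ) − x⁺(x,g₂,γ)‖ ≤ γ‖g₁ − g₂‖, equivalently
‖P_γ(x,g₁) − P_γ(x,g₂)‖ ≤ ‖g₁ − g₂‖. -/
theorem stmt_4 {n q : ℕ}
    (c : EuclideanSpace ℝ (Fin n) → EuclideanSpace ℝ (Fin q))
    (J : EuclideanSpace ℝ (Fin n) → EuclideanSpace ℝ (Fin n) →L[ℝ] EuclideanSpace ℝ (Fin q))
    (h : EuclideanSpace ℝ (Fin q) → ℝ)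
    (L_J L_h : ℝ) (hLJ : 0 < L_J) (hLh : 0 < L_h)
    (hc : ∀ z, HasFDerivAt c (J z) z)
    (hJLip : ∀ a b, ‖J a - J b‖ ≤ L_J * ‖a - b‖)
    (hconv : ConvexOn ℝ Set.univ h)
    (hhLip : ∀ a b, |h a - h b| ≤ L_h * ‖a - b‖)
    (x g₁ g₂ : EuclideanSpace ℝ (Fin n)) (γ : ℝ) (hγ : 0 < γ)
    (xplus₁ xplus₂ : EuclideanSpace ℝ (Fin n))
    (hmin₁ : ∀ u, ⟪g₁, xplus₁ - x⟫ + h (c x + J x (xplus₁ - x)) + ‖xplus₁ - x‖ ^ 2 / (2 * γ) ≤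
      ⟪g₁, u - x⟫ + h (c x + J x (u - x)) + ‖u - x‖ ^ 2 / (2 * γ))
    (hmin₂ : ∀ u, ⟪g₂, xplus₂ - x⟫ + h (c x + J x (xplus₂ - x)) + ‖xplus₂ - x‖ ^ 2 / (2 * γ) ≤
      ⟪g₂, u - x⟫ + h (c x + J x (u - x)) + ‖u - x‖ ^ 2 / (2 * γ)) :
    ‖xplus₁ - xplus₂‖ ≤ γ * ‖g₁ - g₂‖ ∧
      ‖γ⁻¹ • (x - xplus₁) - γ⁻¹ • (x - xplus₂)‖ ≤ ‖g₁ - g₂‖ := by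
  have S₁ := strong_min_s4 c J h hconv x g₁ γ hγ xplus₁ hmin₁ xplus₂
  have S₂ := strong_min_s4 c J h hconv x g₂ γ hγ xplus₂ hmin₂ xplus₁
  have hnsym : ‖xplus₂ - xplus₁‖ = ‖xplus₁ - xplus₂‖ := norm_sub_rev _ _
  -- sum the two inequalities; h terms and norm-square terms cancel
  have hsum : ‖xplus₁ - xplus₂‖ ^ 2 / γ ≤
      ⟪g₁ - g₂, xplus₂ - xplus₁⟫ := by
    have hin : ⟪g₁ - g₂, xplus₂ - xplus₁⟫ =
        ⟪g₁, xplus₂ - x⟫ - ⟪g₁, xplus₁ - x⟫ - ⟪g₂, xplus₂ - x⟫ + ⟪g₂, xplus₁ - x⟫ := by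
      rw [show xplus₂ - xplus₁ = (xplus₂ - x) - (xplus₁ - x) by abel]
      simp only [inner_sub_left, inner_sub_right]
      ring
    rw [hin]
    rw [hnsym] at S₁
    have h2γ : (0:ℝ) < 2 * γ := by linarith
    have : ‖xplus₁ - xplus₂‖ ^ 2 / γ =
        ‖xplus₁ - xplus₂‖ ^ 2 / (2 * γ) + ‖xplus₁ - xplus₂‖ ^ 2 / (2 * γ) := by
      field_simp; ring
    linarith
  have hCS : ⟪g₁ - g₂, xplus₂ - xplus₁⟫ ≤ ‖g₁ - g₂‖ * ‖xplus₁ - xplus₂‖ := by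
    calc ⟪g₁ - g₂, xplus₂ - xplus₁⟫ ≤ ‖g₁ - g₂‖ * ‖xplus₂ - xplus₁‖ :=
          real_inner_le_norm _ _
      _ = ‖g₁ - g₂‖ * ‖xplus₁ - xplus₂‖ := by rw [hnsym]
  have hmain : ‖xplus₁ - xplus₂‖ ≤ γ * ‖g₁ - g₂‖ := by
    rcases eq_or_lt_of_le (norm_nonneg (xplus₁ - xplus₂)) with h0 | h0
    · rw [← h0]; positivity
    · have h1 : ‖xplus₁ - xplus₂‖ ^ 2 ≤ γ * (‖g₁ - g₂‖ * ‖xplus₁ - xplus₂‖) := by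
        have := hsum.trans hCS
        calc ‖xplus₁ - xplus₂‖ ^ 2 = γ * (‖xplus₁ - xplus₂‖ ^ 2 / γ) := by
              field_simp
          _ ≤ γ * (‖g₁ - g₂‖ * ‖xplus₁ - xplus₂‖) := by
              exact mul_le_mul_of_nonneg_left this (le_of_lt hγ)
      have := le_of_mul_le_mul_right (by nlinarith : ‖xplus₁ - xplus₂‖ * ‖xplus₁ - xplus₂‖ ≤ (γ * ‖g₁ - g₂‖) * ‖xplus₁ - xplus₂‖) h0
      exact this
  refine ⟨hmain, ?_⟩
  have heq : γ⁻¹ • (x - xplus₁) - γ⁻¹ • (x - xplus₂) = γ⁻¹ • (xplus₂ - xplus₁) := by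
    rw [← smul_sub]; congr 1; abel
  rw [heq, norm_smul, norm_inv, Real.norm_eq_abs, abs_of_pos hγ, hnsym]
  rw [inv_mul_le_iff₀ hγ]
  linarith [hmain]
end

section
/- Fix x, G ∈ ℝ^n and γ > 0, let x⁺ := x⁺(x, G, γ) be the unique minimizer of u ↦ ψ_γ(x, G, u), and set g̃^r := P_γ(x, G) = (x − x⁺)/γ, g̃ := P_γ(x, ∇f(x)) and δ := G − ∇f(x). Then Φ_h(x⁺) ≤ Φ_h(x) − (γ − L·γ²/2)·‖g̃^r‖² + γ·⟨δ, g̃⟩ + γ·‖δ‖². -/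
open scoped RealInnerProductSpace
open Set

variable {E : Type*} [NormedAddCommGroup E] [InnerProductSpace ℝ E]

/-- quadratic mean-value bound: if ‖φ' t‖ ≤ C·t on [0,1] then ‖φ 1 - φ 0‖ ≤ C/2 -/
lemma taylor_quad_s6 {F : Type*} [NormedAddCommGroup F] [NormedSpace ℝ F]
    (φ : ℝ → F) (φ' : ℝ → F) (C : ℝ)
    (hd : ∀ t ∈ Icc (0:ℝ) 1, HasDerivAt φ (φ' t) t)
    (hb : ∀ t ∈ Icc (0:ℝ) 1, ‖φ' t‖ ≤ C * t) :
    ‖φ 1 - φ 0‖ ≤ C / 2 := by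
  have key := image_norm_le_of_norm_deriv_right_le_deriv_boundary
    (f := fun t => φ t - φ 0) (f' := φ') (a := 0) (b := 1)
    (B := fun t => C * t ^ 2 / 2) (B' := fun t => C * t)
    (by
      apply ContinuousOn.sub _ continuousOn_const
      intro t ht
      exact (hd t ht).continuousAt.continuousWithinAt)
    (by
      intro t ht
      have := ((hd t (Ico_subset_Icc_self ht)).sub_const (φ 0)).hasDerivWithinAt (s := Ici t)
      exact this)
    (by simp)
    (by
      intro t
      have h2 : HasDerivAt (fun t : ℝ => C * t ^ 2 / 2) (C * ((2:ℕ) * t ^ (2-1)) / 2) t :=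
        ((hasDerivAt_pow 2 t).const_mul C).div_const 2
      have : C * ((2:ℕ) * t ^ (2-1)) / 2 = C * t := by push_cast; ring
      rwa [this] at h2)
    (by
      intro t ht
      exact hb t (Ico_subset_Icc_self ht))
  have h1 := key (x := 1) (by norm_num)
  simpa using h1

/-- descent lemma for f with Lipschitz gradient -/
lemma descent_f [CompleteSpace E] (f : E → ℝ) (gradf : E → E) (L_g : ℝ)
    (hf : ∀ z, HasGradientAt f (gradf z) z)
    (hlip : ∀ a b, ‖gradf a - gradf b‖ ≤ L_g * ‖a - b‖) (x y : E) :
    f y ≤ f x + ⟪gradf x, y - x⟫ + L_g * ‖y - x‖ ^ 2 / 2 := by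
  set s := y - x with hs
  have hline : ∀ t : ℝ, HasDerivAt (fun t : ℝ => x + t • s) s t := by
    intro t
    simpa using ((hasDerivAt_id t).smul_const s).const_add x
  have hd : ∀ t ∈ Icc (0:ℝ) 1,
      HasDerivAt (fun t : ℝ => f (x + t • s) - t * ⟪gradf x, s⟫)
        (⟪gradf (x + t • s), s⟫ - ⟪gradf x, s⟫) t := by
    intro t _
    have h1 : HasDerivAt (fun t : ℝ => f (x + t • s)) (⟪gradf (x + t • s), s⟫) t := by
      have hF := (hasGradientAt_iff_hasFDerivAt.mp (hf (x + t • s)))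
      simpa [InnerProductSpace.toDual_apply_apply, Function.comp_def] using hF.comp_hasDerivAt t (hline t)
    simpa [Pi.sub_def] using h1.sub ((hasDerivAt_id t).mul_const ⟪gradf x, s⟫)
  have hb : ∀ t ∈ Icc (0:ℝ) 1,
      ‖⟪gradf (x + t • s), s⟫ - ⟪gradf x, s⟫‖ ≤ (L_g * ‖s‖ ^ 2) * t := by
    intro t ht
    have h1 : ⟪gradf (x + t • s), s⟫ - ⟪gradf x, s⟫ = ⟪gradf (x + t • s) - gradf x, s⟫ := by
      rw [inner_sub_left]
    rw [h1]
    calc ‖⟪gradf (x + t • s) - gradf x, s⟫‖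
        ≤ ‖gradf (x + t • s) - gradf x‖ * ‖s‖ := by
          exact (norm_inner_le_norm _ _)
      _ ≤ (L_g * ‖(x + t • s) - x‖) * ‖s‖ := by
          gcongr; exact hlip _ _
      _ = (L_g * ‖s‖ ^ 2) * t := by
          have : ‖(x + t • s) - x‖ = t * ‖s‖ := by
            simp [norm_smul, Real.norm_eq_abs, abs_of_nonneg ht.1]
          rw [this]; ring
  have key := taylor_quad_s6 (fun t : ℝ => f (x + t • s) - t * ⟪gradf x, s⟫)
    (fun t => ⟪gradf (x + t • s), s⟫ - ⟪gradf x, s⟫) (L_g * ‖s‖ ^ 2) hd hb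
  simp only [one_smul, zero_smul, add_zero, one_mul, zero_mul, sub_zero] at key
  have hy : x + s = y := by rw [hs]; abel
  rw [hy] at key
  have := abs_le.mp (by simpa [Real.norm_eq_abs] using key)
  linarith [this.2]

/-- quadratic approximation bound for c -/
lemma approx_c {F : Type*} [NormedAddCommGroup F] [InnerProductSpace ℝ F]
    (c : E → F) (J : E → E →L[ℝ] F) (L_J : ℝ)
    (hc : ∀ z, HasFDerivAt c (J z) z)
    (hlip : ∀ a b, ‖J a - J b‖ ≤ L_J * ‖a - b‖) (x y : E) :
    ‖c y - c x - J x (y - x)‖ ≤ L_J * ‖y - x‖ ^ 2 / 2 := by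
  set s := y - x with hs
  have hline : ∀ t : ℝ, HasDerivAt (fun t : ℝ => x + t • s) s t := by
    intro t
    simpa using ((hasDerivAt_id t).smul_const s).const_add x
  have hd : ∀ t ∈ Icc (0:ℝ) 1,
      HasDerivAt (fun t : ℝ => c (x + t • s) - t • (J x s))
        (J (x + t • s) s - J x s) t := by
    intro t _
    have h1 : HasDerivAt (fun t : ℝ => c (x + t • s)) (J (x + t • s) s) t :=
      (hc (x + t • s)).comp_hasDerivAt t (hline t)
    simpa [Pi.sub_def] using h1.sub ((hasDerivAt_id t).smul_const (J x s))
  have hb : ∀ t ∈ Icc (0:ℝ) 1,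
      ‖J (x + t • s) s - J x s‖ ≤ (L_J * ‖s‖ ^ 2) * t := by
    intro t ht
    calc ‖J (x + t • s) s - J x s‖ = ‖(J (x + t • s) - J x) s‖ := by
          simp
      _ ≤ ‖J (x + t • s) - J x‖ * ‖s‖ := (J (x + t • s) - J x).le_opNorm s
      _ ≤ (L_J * ‖(x + t • s) - x‖) * ‖s‖ := by gcongr; exact hlip _ _
      _ = (L_J * ‖s‖ ^ 2) * t := by
          have : ‖(x + t • s) - x‖ = t * ‖s‖ := by
            simp [norm_smul, Real.norm_eq_abs, abs_of_nonneg ht.1]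
          rw [this]; ring
  have key := taylor_quad_s6 (fun t : ℝ => c (x + t • s) - t • (J x s))
    (fun t => J (x + t • s) s - J x s) (L_J * ‖s‖ ^ 2) hd hb
  simp only [one_smul, zero_smul, add_zero, sub_zero] at key
  have hy : x + s = y := by rw [hs]; abel
  rw [hy] at key
  calc ‖c y - c x - J x s‖ = ‖c y - J x s - c x‖ := by rw [sub_right_comm]
    _ ≤ L_J * ‖s‖ ^ 2 / 2 := key

lemma norm_combo (a b : E) (t : ℝ) :
    ‖(1 - t) • a + t • b‖ ^ 2
      = (1 - t) * ‖a‖ ^ 2 + t * ‖b‖ ^ 2 - t * (1 - t) * ‖b - a‖ ^ 2 := by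
  simp only [← real_inner_self_eq_norm_sq, inner_add_left, inner_add_right,
    inner_sub_left, inner_sub_right, real_inner_smul_left, real_inner_smul_right]
  rw [real_inner_comm b a]
  ring

/-- strong minimality: the minimizer of convex + quadratic satisfies a strengthened bound -/
lemma strongMin {φ : E → ℝ} (hφ : ConvexOn ℝ Set.univ φ) {γ : ℝ} (hγ : 0 < γ)
    (x u0 : E)
    (hmin : ∀ u, φ u0 + ‖u0 - x‖ ^ 2 / (2 * γ) ≤ φ u + ‖u - x‖ ^ 2 / (2 * γ)) (u : E) :
    φ u0 + ‖u0 - x‖ ^ 2 / (2 * γ) + ‖u - u0‖ ^ 2 / (2 * γ)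
      ≤ φ u + ‖u - x‖ ^ 2 / (2 * γ) := by
  set K := ‖u - u0‖ ^ 2 / (2 * γ) with hK
  have hK0 : 0 ≤ K := by positivity
  rw [show φ u0 + ‖u0 - x‖ ^ 2 / (2 * γ) + K
      = (φ u0 + ‖u0 - x‖ ^ 2 / (2 * γ) + K) by rfl]
  apply le_of_forall_pos_le_add
  intro ε hε
  set t : ℝ := min 1 (ε / (K + 1)) with htdef
  have ht0 : 0 < t := lt_min one_pos (by positivity)
  have ht1 : t ≤ 1 := min_le_left _ _
  have htK : t * K ≤ ε := by
    have h1 : t ≤ ε / (K + 1) := min_le_right _ _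
    have h2 : t * K ≤ (ε / (K + 1)) * K := by
      apply mul_le_mul_of_nonneg_right h1 hK0
    have h3 : (ε / (K + 1)) * K ≤ ε := by
      rw [div_mul_eq_mul_div, div_le_iff₀ (by positivity)]
      nlinarith
    linarith
  set v : E := (1 - t) • u0 + t • u with hv
  have hφv : φ v ≤ (1 - t) * φ u0 + t * φ u :=
    hφ.2 (Set.mem_univ u0) (Set.mem_univ u) (by linarith) (le_of_lt ht0) (by ring)
  have hvx : v - x = (1 - t) • (u0 - x) + t • (u - x) := by
    rw [hv]; rw [smul_sub, smul_sub]
    have : (1 - t) • x + t • x = x := by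
      rw [← add_smul]; simp
    rw [show (1 - t) • u0 - (1 - t) • x + (t • u - t • x)
        = (1 - t) • u0 + t • u - ((1 - t) • x + t • x) by abel, this]
  have hnorm : ‖v - x‖ ^ 2
      = (1 - t) * ‖u0 - x‖ ^ 2 + t * ‖u - x‖ ^ 2 - t * (1 - t) * ‖u - u0‖ ^ 2 := by
    rw [hvx, norm_combo]
    abel_nf
  have hmv := hmin v
  -- combine
  have hexp : φ u0 + ‖u0 - x‖ ^ 2 / (2 * γ)
      ≤ (1 - t) * (φ u0 + ‖u0 - x‖ ^ 2 / (2 * γ)) + t * (φ u + ‖u - x‖ ^ 2 / (2 * γ))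
        - t * (1 - t) * K := by
    have : ‖v - x‖ ^ 2 / (2 * γ)
        = (1 - t) * (‖u0 - x‖ ^ 2 / (2 * γ)) + t * (‖u - x‖ ^ 2 / (2 * γ))
          - t * (1 - t) * K := by
      rw [hnorm, hK]; field_simp
    nlinarith [hmv, hφv]
  -- divide by t
  have hdiv : φ u0 + ‖u0 - x‖ ^ 2 / (2 * γ) + (1 - t) * K
      ≤ φ u + ‖u - x‖ ^ 2 / (2 * γ) := by
    have h4 : t * (φ u0 + ‖u0 - x‖ ^ 2 / (2 * γ) + (1 - t) * K)
        ≤ t * (φ u + ‖u - x‖ ^ 2 / (2 * γ)) := by nlinarith [hexp]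
    exact le_of_mul_le_mul_left h4 ht0
  linarith


set_option maxHeartbeats 1000000

/-- descent inequality for one step of the stochastic composite method:
Φ_h(x⁺) ≤ Φ_h(x) − (γ − Lγ²/2)‖g̃ʳ‖² + γ⟨δ, g̃⟩ + γ‖δ‖², where
x⁺ minimizes ψ_γ(x, G, ·), g̃ʳ = P_γ(x, G), g̃ = P_γ(x, ∇f(x)), δ = G − ∇f(x),
Φ_h = f + h∘c and L = L_g + L_h·L_J. -/
theorem stmt_6 {n q : ℕ}
    (f : EuclideanSpace ℝ (Fin n) → ℝ)
    (gradf : EuclideanSpace ℝ (Fin n) → EuclideanSpace ℝ (Fin n))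
    (c : EuclideanSpace ℝ (Fin n) → EuclideanSpace ℝ (Fin q))
    (J : EuclideanSpace ℝ (Fin n) → EuclideanSpace ℝ (Fin n) →L[ℝ] EuclideanSpace ℝ (Fin q))
    (h : EuclideanSpace ℝ (Fin q) → ℝ)
    (L_g L_J L_h L : ℝ) (hLg : 0 < L_g) (hLJ : 0 < L_J) (hLh : 0 < L_h)
    (hL : L = L_g + L_h * L_J)
    (hf : ∀ z, HasGradientAt f (gradf z) z)
    (hgradLip : ∀ a b, ‖gradf a - gradf b‖ ≤ L_g * ‖a - b‖)
    (hc : ∀ z, HasFDerivAt c (J z) z)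
    (hJLip : ∀ a b, ‖J a - J b‖ ≤ L_J * ‖a - b‖)
    (hconv : ConvexOn ℝ Set.univ h)
    (hhLip : ∀ a b, |h a - h b| ≤ L_h * ‖a - b‖)
    (x G : EuclideanSpace ℝ (Fin n)) (γ : ℝ) (hγ : 0 < γ)
    (xplus xtilde : EuclideanSpace ℝ (Fin n))
    -- x⁺ is the minimizer of ψ_γ(x, G, ·):
    (hxplus : ∀ u, ⟪G, xplus - x⟫ + h (c x + J x (xplus - x)) + ‖xplus - x‖ ^ 2 / (2 * γ) ≤
      ⟪G, u - x⟫ + h (c x + J x (u - x)) + ‖u - x‖ ^ 2 / (2 * γ))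
    -- x̃ is the minimizer of ψ_γ(x, ∇f(x), ·), so that g̃ = (x − x̃)/γ:
    (hxtilde : ∀ u, ⟪gradf x, xtilde - x⟫ + h (c x + J x (xtilde - x)) +
        ‖xtilde - x‖ ^ 2 / (2 * γ) ≤
      ⟪gradf x, u - x⟫ + h (c x + J x (u - x)) + ‖u - x‖ ^ 2 / (2 * γ)) :
    f xplus + h (c xplus) ≤
      f x + h (c x) - (γ - L * γ ^ 2 / 2) * ‖γ⁻¹ • (x - xplus)‖ ^ 2 +
        γ * ⟪G - gradf x, γ⁻¹ • (x - xtilde)⟫ + γ * ‖G - gradf x‖ ^ 2 := by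
  -- convexity of the linearized model
  have hconvφ : ∀ g : EuclideanSpace ℝ (Fin n),
      ConvexOn ℝ Set.univ (fun u => ⟪g, u - x⟫ + h (c x + J x (u - x))) := by
    intro g
    refine ⟨convex_univ, ?_⟩
    intro a _ b _ ta tb hta htb hab
    have hxx : ta • x + tb • x = x := by rw [← add_smul, hab, one_smul]
    have hsplit : (ta • a + tb • b) - x = ta • (a - x) + tb • (b - x) := by
      rw [smul_sub, smul_sub,
        show ta • a - ta • x + (tb • b - tb • x)
          = ta • a + tb • b - (ta • x + tb • x) by abel, hxx]
    have hkey : c x + J x ((ta • a + tb • b) - x)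
        = ta • (c x + J x (a - x)) + tb • (c x + J x (b - x)) := by
      rw [hsplit, map_add, map_smul, map_smul, smul_add, smul_add,
        show ta • c x + ta • J x (a - x) + (tb • c x + tb • J x (b - x))
          = (ta • c x + tb • c x) + (ta • J x (a - x) + tb • J x (b - x)) by abel,
        ← add_smul, hab, one_smul]
    have hinner : ⟪g, (ta • a + tb • b) - x⟫ = ta * ⟪g, a - x⟫ + tb * ⟪g, b - x⟫ := by
      rw [hsplit, inner_add_right, real_inner_smul_right, real_inner_smul_right]
    have hh := hconv.2 (Set.mem_univ (c x + J x (a - x))) (Set.mem_univ (c x + J x (b - x)))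
      hta htb hab
    simp only [smul_eq_mul] at hh ⊢
    rw [hinner, hkey]
    linarith
  -- strong minimality for the two minimizers
  have hsmG : ∀ u, ⟪G, xplus - x⟫ + h (c x + J x (xplus - x)) + ‖xplus - x‖ ^ 2 / (2 * γ)
      + ‖u - xplus‖ ^ 2 / (2 * γ)
      ≤ ⟪G, u - x⟫ + h (c x + J x (u - x)) + ‖u - x‖ ^ 2 / (2 * γ) :=
    fun u => strongMin (hconvφ G) hγ x xplus hxplus u
  have hsmg : ∀ u, ⟪gradf x, xtilde - x⟫ + h (c x + J x (xtilde - x))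
      + ‖xtilde - x‖ ^ 2 / (2 * γ) + ‖u - xtilde‖ ^ 2 / (2 * γ)
      ≤ ⟪gradf x, u - x⟫ + h (c x + J x (u - x)) + ‖u - x‖ ^ 2 / (2 * γ) :=
    fun u => strongMin (hconvφ (gradf x)) hγ x xtilde hxtilde u
  set s : EuclideanSpace ℝ (Fin n) := xplus - x with hs
  set N : ℝ := ‖s‖ with hN
  set δ : EuclideanSpace ℝ (Fin n) := G - gradf x with hδ
  -- Step 3: strong minimality against u = x
  have h3 : ⟪G, s⟫ + h (c x + J x s) + N ^ 2 / (2 * γ) + N ^ 2 / (2 * γ) ≤ h (c x) := by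
    have := hsmG x
    simp only [sub_self, inner_zero_right, map_zero, add_zero, norm_zero] at this
    have hrev : ‖x - xplus‖ = N := by rw [hN, hs, norm_sub_rev]
    rw [hrev] at this
    simpa using this
  -- Step 1: descent lemma for f
  have hA : f xplus ≤ f x + ⟪gradf x, s⟫ + L_g * N ^ 2 / 2 :=
    descent_f f gradf L_g hf hgradLip x xplus
  -- Step 2: bound for h ∘ c
  have hC : ‖c xplus - c x - J x s‖ ≤ L_J * N ^ 2 / 2 :=
    approx_c c J L_J hc hJLip x xplus
  have hB : h (c xplus) ≤ h (c x + J x s) + L_h * (L_J * N ^ 2 / 2) := by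
    have h1 := hhLip (c xplus) (c x + J x s)
    have h2 : ‖c xplus - (c x + J x s)‖ = ‖c xplus - c x - J x s‖ := by
      rw [sub_add_eq_sub_sub]
    have h3' : L_h * ‖c xplus - (c x + J x s)‖ ≤ L_h * (L_J * N ^ 2 / 2) := by
      rw [h2]; exact mul_le_mul_of_nonneg_left hC (le_of_lt hLh)
    have := le_abs_self (h (c xplus) - h (c x + J x s))
    linarith
  -- Step 4: nonexpansiveness
  have hdist : ‖xtilde - xplus‖ ≤ γ * ‖δ‖ := by
    have h4a := hsmG xtilde
    have h4b := hsmg xplus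
    have e1 : ⟪G, xtilde - x⟫ - ⟪G, xplus - x⟫ = ⟪G, xtilde - xplus⟫ := by
      rw [← inner_sub_right]; congr 1; abel
    have e2 : ⟪gradf x, xplus - x⟫ - ⟪gradf x, xtilde - x⟫ = - ⟪gradf x, xtilde - xplus⟫ := by
      rw [← inner_sub_right, ← inner_neg_right]; congr 1; abel
    have e3 : ⟪G, xtilde - xplus⟫ - ⟪gradf x, xtilde - xplus⟫ = ⟪δ, xtilde - xplus⟫ := by
      rw [hδ, inner_sub_left]
    have hrev : ‖xplus - xtilde‖ = ‖xtilde - xplus‖ := norm_sub_rev _ _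
    rw [hrev] at h4b
    have hsum : ‖xtilde - xplus‖ ^ 2 / (2 * γ) + ‖xtilde - xplus‖ ^ 2 / (2 * γ)
        ≤ ⟪δ, xtilde - xplus⟫ := by linarith
    have hcs : ⟪δ, xtilde - xplus⟫ ≤ ‖δ‖ * ‖xtilde - xplus‖ := real_inner_le_norm _ _
    set d : ℝ := ‖xtilde - xplus‖ with hd
    have hd0 : 0 ≤ d := norm_nonneg _
    have hsq : d ^ 2 ≤ γ * (‖δ‖ * d) := by
      have : d ^ 2 / (2 * γ) + d ^ 2 / (2 * γ) = d ^ 2 / γ := by field_simp; ring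
      rw [this] at hsum
      rw [div_le_iff₀ hγ] at hsum
      nlinarith [hsum, hcs]
    rcases eq_or_lt_of_le hd0 with heq | hlt
    · rw [← heq]; positivity
    · nlinarith [hsq, hlt]
  -- rewriting the goal
  have r1 : ‖γ⁻¹ • (x - xplus)‖ ^ 2 = N ^ 2 / γ ^ 2 := by
    rw [norm_smul, Real.norm_eq_abs, abs_of_pos (inv_pos.mpr hγ), norm_sub_rev, mul_pow,
      inv_pow, inv_mul_eq_div]
  have r2 : γ * ⟪G - gradf x, γ⁻¹ • (x - xtilde)⟫ = ⟪δ, x - xtilde⟫ := by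
    rw [real_inner_smul_right, hδ]
    field_simp
  have r3 : (γ - L * γ ^ 2 / 2) * (N ^ 2 / γ ^ 2) = N ^ 2 / γ - L * N ^ 2 / 2 := by
    field_simp
  have e4 : ⟪gradf x, s⟫ - ⟪G, s⟫ = ⟪δ, x - xplus⟫ := by
    rw [← inner_sub_left, hδ, hs,
      show gradf x - G = -(G - gradf x) by abel,
      show xplus - x = -(x - xplus) by abel, inner_neg_neg]
  have e5 : ⟪δ, x - xplus⟫ = ⟪δ, x - xtilde⟫ + ⟪δ, xtilde - xplus⟫ := by
    rw [← inner_add_right]; congr 1; abel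
  have e6 : ⟪δ, xtilde - xplus⟫ ≤ γ * ‖δ‖ ^ 2 := by
    have hcs : ⟪δ, xtilde - xplus⟫ ≤ ‖δ‖ * ‖xtilde - xplus‖ := real_inner_le_norm _ _
    have : ‖δ‖ * ‖xtilde - xplus‖ ≤ ‖δ‖ * (γ * ‖δ‖) :=
      mul_le_mul_of_nonneg_left hdist (norm_nonneg _)
    nlinarith
  have hN4 : N ^ 2 / (2 * γ) + N ^ 2 / (2 * γ) = N ^ 2 / γ := by field_simp; ring
  rw [r1, r2, r3]
  subst hL
  linarith [hA, hB, h3, e6, hN4, e4, e5]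
end

section
/- Fix x ∈ ℝ^n and γ > 0. If x itself is a global minimizer of u ↦ ψ_γ(x, ∇f(x), u) (equivalently, P_γ(x, ∇f(x)) = 0), then x is a first-order critical point of the composite problem minimize f + h∘c: there exists p ∈ ℝ^q such that h(z) ≥ h(c(x)) + ⟨p, z − c(x)⟩ for all z ∈ ℝ^q (i.e. p is a subgradient of h at c(x)) and ∇f(x) + J(x)*p = 0, where J(x)* denotes the adjoint of J(x). -/
set_option maxHeartbeats 1000000


open scoped RealInnerProductSpace

/-- if x itself is a global minimizer of u ↦ ψ_γ(x, ∇f(x), u) (i.e.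
P_γ(x, ∇f(x)) = 0), then x is a first-order critical point of the composite problem
min f + h∘c: there is a subgradient p of h at c(x) with ∇f(x) + J(x)*p = 0. -/
theorem stmt_8 {n q : ℕ}
    (f : EuclideanSpace ℝ (Fin n) → ℝ)
    (gradf : EuclideanSpace ℝ (Fin n) → EuclideanSpace ℝ (Fin n))
    (c : EuclideanSpace ℝ (Fin n) → EuclideanSpace ℝ (Fin q))
    (J : EuclideanSpace ℝ (Fin n) → EuclideanSpace ℝ (Fin n) →L[ℝ] EuclideanSpace ℝ (Fin q))
    (h : EuclideanSpace ℝ (Fin q) → ℝ)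
    (L_h : ℝ) (hLh : 0 < L_h)
    (hf : ∀ z, HasGradientAt f (gradf z) z)
    (hc : ∀ z, HasFDerivAt c (J z) z)
    (hconv : ConvexOn ℝ Set.univ h)
    (hhLip : ∀ a b, |h a - h b| ≤ L_h * ‖a - b‖)
    (x : EuclideanSpace ℝ (Fin n)) (γ : ℝ) (hγ : 0 < γ)
    -- x itself is a global minimizer of u ↦ ψ_γ(x, ∇f(x), u):
    (hmin : ∀ u, ⟪gradf x, x - x⟫ + h (c x + J x (x - x)) + ‖x - x‖ ^ 2 / (2 * γ) ≤
      ⟪gradf x, u - x⟫ + h (c x + J x (u - x)) + ‖u - x‖ ^ 2 / (2 * γ)) :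
    ∃ p : EuclideanSpace ℝ (Fin q),
      (∀ z, h (c x) + ⟪p, z - c x⟫ ≤ h z) ∧
        gradf x + ContinuousLinearMap.adjoint (J x) p = 0 := by
  classical
  set g := gradf x with hg
  set K := J x with hK
  set cx := c x with hcx
  -- base inequality from hmin
  have hbase : ∀ u, h cx ≤ ⟪g, u - x⟫ + h (cx + K (u - x)) + ‖u - x‖ ^ 2 / (2 * γ) := by
    intro u
    have := hmin u
    simpa using this
  -- key inequality
  have key : ∀ v, h cx + ⟪-g, v⟫ ≤ h (cx + K v) := by
    intro v
    set a : ℝ := h (cx + K v) - h cx + ⟪g, v⟫ with ha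
    set C : ℝ := ‖v‖ ^ 2 / (2 * γ) with hC
    have hCnn : 0 ≤ C := by positivity
    have H : ∀ t : ℝ, 0 < t → t ≤ 1 → 0 ≤ a + t * C := by
      intro t ht0 ht1
      have h1 := hbase (x + t • v)
      have e1 : (x + t • v) - x = t • v := by abel
      rw [e1] at h1
      have e2 : K (t • v) = t • K v := by simp
      have e3 : ⟪g, t • v⟫ = t * ⟪g, v⟫ := real_inner_smul_right g v t
      have e4 : ‖t • v‖ ^ 2 = t ^ 2 * ‖v‖ ^ 2 := by
        rw [norm_smul]; rw [Real.norm_eq_abs]; rw [mul_pow, sq_abs]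
      rw [e2, e3, e4] at h1
      -- convexity
      have hcomb : cx + t • K v = (1 - t) • cx + t • (cx + K v) := by module
      have h2 := hconv.2 (Set.mem_univ cx) (Set.mem_univ (cx + K v))
        (by linarith : (0:ℝ) ≤ 1 - t) ht0.le (by ring)
      rw [← hcomb] at h2
      have : h cx ≤ t * ⟪g, v⟫ + ((1 - t) * h cx + t * h (cx + K v)) + t ^ 2 * ‖v‖ ^ 2 / (2 * γ) := by
        have := h2
        simp only [smul_eq_mul] at this
        linarith [h1]
      have ht2 : t ^ 2 * ‖v‖ ^ 2 / (2 * γ) = t * (t * C) := by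
        rw [hC]; ring
      nlinarith [this]
    have hanneg : 0 ≤ a := by
      by_contra hcon
      push_neg at hcon
      set t : ℝ := min 1 (-a / (2 * C + 1)) with htdef
      have htpos : 0 < t := by
        apply lt_min one_pos
        apply div_pos (by linarith) (by linarith)
      have ht1 : t ≤ 1 := min_le_left _ _
      have ht2 : t ≤ -a / (2 * C + 1) := min_le_right _ _
      have := H t htpos ht1
      have htC : t * C ≤ (-a / (2 * C + 1)) * C := mul_le_mul_of_nonneg_right ht2 hCnn
      have : (-a / (2 * C + 1)) * C ≤ -a / 2 := by
        rw [div_mul_eq_mul_div, div_le_div_iff₀ (by linarith) (by norm_num)]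
        nlinarith
      linarith
    have : ⟪-g, v⟫ = -⟪g, v⟫ := by simp
    rw [this]; linarith
  -- continuity of h
  have hcont : Continuous h := by
    have : LipschitzWith (Real.toNNReal L_h) h := by
      apply LipschitzWith.of_dist_le_mul
      intro a b
      rw [Real.coe_toNNReal _ hLh.le, Real.dist_eq, dist_eq_norm]
      exact hhLip a b
    exact this.continuous
  -- the two convex sets
  set F : EuclideanSpace ℝ (Fin q) → ℝ := fun z => h (cx + z) - h cx with hF
  have hFdef : ∀ z, F z = h (cx + z) - h cx := fun z => rfl
  have keyF : ∀ v, ⟪-g, v⟫ ≤ F (K v) := by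
    intro v; have := key v; rw [hFdef]; linarith
  set A : Set (EuclideanSpace ℝ (Fin q) × ℝ) := {pt | F pt.1 < pt.2} with hA
  have Aopen : IsOpen A := by
    apply isOpen_lt
    · exact (hcont.comp (continuous_const.add continuous_fst)).sub continuous_const
    · exact continuous_snd
  have Aconv : Convex ℝ A := by
    intro p1 hp1 p2 hp2 a b ha hb hab
    have hp1' : h (cx + p1.1) - h cx < p1.2 := hp1
    have hp2' : h (cx + p2.1) - h cx < p2.2 := hp2
    have hcomb : cx + (a • p1.1 + b • p2.1) = a • (cx + p1.1) + b • (cx + p2.1) := by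
      have e : a • (cx + p1.1) + b • (cx + p2.1) = (a + b) • cx + (a • p1.1 + b • p2.1) := by
        module
      rw [e, hab, one_smul]
    have h2 := hconv.2 (Set.mem_univ (cx + p1.1)) (Set.mem_univ (cx + p2.1)) ha hb hab
    rw [← hcomb] at h2
    simp only [smul_eq_mul] at h2
    show h (cx + (a • p1.1 + b • p2.1)) - h cx < a * p1.2 + b * p2.2
    rcases lt_or_eq_of_le ha with ha' | ha'
    · have e1 : a * (h (cx + p1.1) - h cx) < a * p1.2 := mul_lt_mul_of_pos_left hp1' ha'
      have e2 : b * (h (cx + p2.1) - h cx) ≤ b * p2.2 := mul_le_mul_of_nonneg_left hp2'.le hb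
      have hsplit : a * h cx + b * h cx = h cx := by rw [← add_mul, hab, one_mul]
      linarith
    · have ha0 : a = 0 := ha'.symm
      have hb1 : b = 1 := by linarith
      rw [ha0, hb1] at h2 ⊢
      simp only [zero_mul, one_mul, zero_smul, zero_add, one_smul] at h2 ⊢
      linarith
  set Lc : EuclideanSpace ℝ (Fin n) →L[ℝ] EuclideanSpace ℝ (Fin q) × ℝ :=
    K.prod (innerSL ℝ (-g)) with hLc
  have hLcApp : ∀ v, Lc v = (K v, ⟪-g, v⟫) := fun v => rfl
  set B : Set (EuclideanSpace ℝ (Fin q) × ℝ) := Set.range Lc with hB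
  have Bconv : Convex ℝ B := by
    rw [hB, ← Set.image_univ]
    exact convex_univ.linear_image Lc.toLinearMap
  have disj : Disjoint A B := by
    rw [Set.disjoint_left]
    rintro pt hpt ⟨v, rfl⟩
    rw [hLcApp] at hpt
    simp only [hA, Set.mem_setOf_eq] at hpt
    exact absurd hpt (not_lt.mpr (keyF v))
  obtain ⟨ℓ, u, hAlt, hBle⟩ := geometric_hahn_banach_open Aconv Aopen Bconv disj
  have hB0 : ∀ v, ℓ (Lc v) = 0 := by
    intro v
    by_contra hne
    have h1 : ∀ t : ℝ, u ≤ t * ℓ (Lc v) := by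
      intro t
      have : u ≤ ℓ (Lc (t • v)) := hBle _ ⟨t • v, rfl⟩
      rwa [map_smul, map_smul, smul_eq_mul] at this
    have := h1 ((u - 1) / ℓ (Lc v))
    rw [div_mul_cancel₀ _ hne] at this
    linarith
  have hu0 : u ≤ 0 := by
    have := hB0 0
    have h2 := hBle (Lc 0) ⟨0, rfl⟩
    rw [this] at h2; exact h2
  set c₀ : ℝ := ℓ (0, 1) with hc₀def
  have hdec : ∀ z t, ℓ (z, t) = ℓ (z, 0) + t * c₀ := by
    intro z t
    have e : (z, t) = ((z, (0:ℝ)) + t • ((0 : EuclideanSpace ℝ (Fin q)), (1:ℝ))) := by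
      simp [Prod.ext_iff]
    rw [e, map_add, map_smul, smul_eq_mul]
  have hc0 : c₀ < 0 := by
    have hmem : ((0 : EuclideanSpace ℝ (Fin q)), (1:ℝ)) ∈ A := by
      simp [hA, hF]
    have := hAlt _ hmem
    calc c₀ = ℓ (0, 1) := rfl
    _ < u := this
    _ ≤ 0 := hu0
  have hc0ne : -c₀ ≠ 0 := by linarith
  set p : EuclideanSpace ℝ (Fin q) :=
    (InnerProductSpace.toDual ℝ (EuclideanSpace ℝ (Fin q))).symm
      ((-c₀)⁻¹ • (ℓ.comp (ContinuousLinearMap.inl ℝ (EuclideanSpace ℝ (Fin q)) ℝ))) with hp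
  have hpz : ∀ z, ⟪p, z⟫ = (-c₀)⁻¹ * ℓ (z, 0) := by
    intro z
    rw [hp, InnerProductSpace.toDual_symm_apply]
    simp [ContinuousLinearMap.smul_apply, ContinuousLinearMap.comp_apply,
      ContinuousLinearMap.inl_apply, smul_eq_mul]
  refine ⟨p, ?_, ?_⟩
  · intro z
    set w := z - cx with hw
    have hwz : cx + w = z := by rw [hw]; abel
    have hFw : F w = h z - h cx := by rw [hFdef, hwz]
    have hlt : ∀ ε : ℝ, 0 < ε → ⟪p, w⟫ < (F w) + ε := by
      intro ε hε
      have hmem : (w, F w + ε) ∈ A := by simp [hA]; linarith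
      have := hAlt _ hmem
      rw [hdec] at this
      have h3 : ℓ (w, 0) < (F w + ε) * (-c₀) := by nlinarith
      have := hpz w
      rw [this]
      rw [inv_mul_lt_iff₀ (by linarith : (0:ℝ) < -c₀)]
      linarith [h3]
    have hle : ⟪p, w⟫ ≤ F w := le_of_forall_pos_lt_add (fun ε hε => hlt ε hε)
    rw [hFw] at hle
    linarith
  · have hpK : ∀ v, ⟪p, K v⟫ = ⟪-g, v⟫ := by
      intro v
      have h0 := hB0 v
      rw [hLcApp, hdec] at h0
      have : ℓ (K v, 0) = ⟪-g, v⟫ * (-c₀) := by linarith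
      rw [hpz, this]
      field_simp
      exact mul_div_cancel_left₀ _ hc0.ne
    have hsum : ∀ v, ⟪g + ContinuousLinearMap.adjoint K p, v⟫ = 0 := by
      intro v
      rw [inner_add_left, ContinuousLinearMap.adjoint_inner_left, hpK]
      rw [inner_neg_left]
      ring
    have := hsum (g + ContinuousLinearMap.adjoint K p)
    exact inner_self_eq_zero.mp this
end

section
/- For every x ∈ ℝ^n, G ∈ ℝ^n and ρ > 0: φ_ρ(x; G) ≥ ρ·θ(x) − ‖G‖. In particular, if θ(x) > 0 and ξ ∈ (0,1), then φ_ρ(x; G) ≥ ρ·ξ·θ(x) whenever ρ ≥ ‖G‖ / ((1 − ξ)·θ(x)). -/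
open scoped RealInnerProductSpace

/-- The criticality measure θ(x) = ‖c(x)‖ − min_{‖s‖≤1} ‖c(x) + J(x)s‖. -/
noncomputable def thetaMeasure {n q : ℕ}
    (c : EuclideanSpace ℝ (Fin n) → EuclideanSpace ℝ (Fin q))
    (J : EuclideanSpace ℝ (Fin n) → EuclideanSpace ℝ (Fin n) →L[ℝ] EuclideanSpace ℝ (Fin q))
    (x : EuclideanSpace ℝ (Fin n)) : ℝ :=
  ‖c x‖ - sInf ((fun s => ‖c x + J x s‖) '' Metric.closedBall 0 1)

/-- φ_ρ(x; G) = ρ‖c(x)‖ − min_{‖s‖≤1} (⟨G, s⟩ + ρ‖c(x) + J(x)s‖). -/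
noncomputable def phiMeasure {n q : ℕ}
    (c : EuclideanSpace ℝ (Fin n) → EuclideanSpace ℝ (Fin q))
    (J : EuclideanSpace ℝ (Fin n) → EuclideanSpace ℝ (Fin n) →L[ℝ] EuclideanSpace ℝ (Fin q))
    (x G : EuclideanSpace ℝ (Fin n)) (ρ : ℝ) : ℝ :=
  ρ * ‖c x‖ - sInf ((fun s => ⟪G, s⟫ + ρ * ‖c x + J x s‖) '' Metric.closedBall 0 1)

/-- φ_ρ(x; G) ≥ ρθ(x) − ‖G‖; in particular, if θ(x) > 0 and ξ ∈ (0,1),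
then φ_ρ(x; G) ≥ ρξθ(x) whenever ρ ≥ ‖G‖/((1 − ξ)θ(x)). -/
theorem stmt_10 {n q : ℕ}
    (c : EuclideanSpace ℝ (Fin n) → EuclideanSpace ℝ (Fin q))
    (J : EuclideanSpace ℝ (Fin n) → EuclideanSpace ℝ (Fin n) →L[ℝ] EuclideanSpace ℝ (Fin q))
    (hc : ∀ z, HasFDerivAt c (J z) z)
    (x G : EuclideanSpace ℝ (Fin n)) (ρ : ℝ) (hρ : 0 < ρ) :
    phiMeasure c J x G ρ ≥ ρ * thetaMeasure c J x - ‖G‖ ∧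
      ∀ ξ : ℝ, ξ ∈ Set.Ioo (0 : ℝ) 1 → 0 < thetaMeasure c J x →
        ρ ≥ ‖G‖ / ((1 - ξ) * thetaMeasure c J x) →
        phiMeasure c J x G ρ ≥ ρ * ξ * thetaMeasure c J x := by
  have h0S : (0 : EuclideanSpace ℝ (Fin n)) ∈ Metric.closedBall (0 : EuclideanSpace ℝ (Fin n)) 1 :=
    Metric.mem_closedBall_self zero_le_one
  have hne : ((fun s => ‖c x + J x s‖) '' Metric.closedBall 0 1).Nonempty := ⟨_, ⟨0, h0S, rfl⟩⟩
  have hbdd : BddBelow ((fun s => ⟪G, s⟫ + ρ * ‖c x + J x s‖) '' Metric.closedBall 0 1) := by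
    refine ⟨-‖G‖, ?_⟩
    rintro _ ⟨s, hs, rfl⟩
    dsimp only
    have hs1 : ‖s‖ ≤ 1 := by simpa using hs
    have h1 := abs_real_inner_le_norm G s
    have h2 : |⟪G, s⟫| ≤ ‖G‖ := h1.trans (by nlinarith [norm_nonneg G])
    have h3 := abs_le.mp h2
    nlinarith [norm_nonneg (c x + J x s)]
  have key : phiMeasure c J x G ρ ≥ ρ * thetaMeasure c J x - ‖G‖ := by
    unfold phiMeasure thetaMeasure
    rw [mul_sub]
    have hA : (sInf ((fun s => ⟪G, s⟫ + ρ * ‖c x + J x s‖) '' Metric.closedBall 0 1) - ‖G‖) / ρ ≤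
        sInf ((fun s => ‖c x + J x s‖) '' Metric.closedBall 0 1) := by
      apply le_csInf hne
      rintro _ ⟨s, hs, rfl⟩
      dsimp only
      rw [div_le_iff₀ hρ]
      have hB : sInf ((fun s => ⟪G, s⟫ + ρ * ‖c x + J x s‖) '' Metric.closedBall 0 1) ≤
          ⟪G, s⟫ + ρ * ‖c x + J x s‖ := csInf_le hbdd ⟨s, hs, rfl⟩
      have hs1 : ‖s‖ ≤ 1 := by simpa using hs
      have h1 := abs_real_inner_le_norm G s
      have h2 : |⟪G, s⟫| ≤ ‖G‖ := h1.trans (by nlinarith [norm_nonneg G])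
      have h3 := abs_le.mp h2
      nlinarith
    rw [div_le_iff₀ hρ] at hA
    nlinarith
  refine ⟨key, fun ξ hξ hθ hρ2 => ?_⟩
  obtain ⟨hξ0, hξ1⟩ := hξ
  have hden : 0 < (1 - ξ) * thetaMeasure c J x := mul_pos (by linarith) hθ
  rw [ge_iff_le, div_le_iff₀ hden] at hρ2
  nlinarith [key]
end

section
/- For every x ∈ ℝ^n, G ∈ ℝ^n, ρ > 0 and ξ ∈ (0,1): θ(x) ≤ φ_ρ(x; G)/(ξ·ρ) + ‖G‖/((1 − ξ)·ρ). (Here θ(x) ≥ 0 and φ_ρ(x; G) ≥ 0 always hold.) -/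
open scoped RealInnerProductSpace

/-- θ(x) ≤ φ_ρ(x; G)/(ξρ) + ‖G‖/((1 − ξ)ρ); moreover θ(x) ≥ 0 and
φ_ρ(x; G) ≥ 0 always hold. -/
theorem stmt_11 {n q : ℕ}
    (c : EuclideanSpace ℝ (Fin n) → EuclideanSpace ℝ (Fin q))
    (J : EuclideanSpace ℝ (Fin n) → EuclideanSpace ℝ (Fin n) →L[ℝ] EuclideanSpace ℝ (Fin q))
    (hc : ∀ z, HasFDerivAt c (J z) z)
    (x G : EuclideanSpace ℝ (Fin n)) (ρ ξ : ℝ) (hρ : 0 < ρ) (hξ : ξ ∈ Set.Ioo (0 : ℝ) 1) :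
    thetaMeasure c J x ≤ phiMeasure c J x G ρ / (ξ * ρ) + ‖G‖ / ((1 - ξ) * ρ) ∧
      0 ≤ thetaMeasure c J x ∧ 0 ≤ phiMeasure c J x G ρ := by
  obtain ⟨hξ0, hξ1⟩ := hξ
  set K := Metric.closedBall (0 : EuclideanSpace ℝ (Fin n)) 1 with hK
  have hKc : IsCompact K := isCompact_closedBall _ _
  have h0K : (0 : EuclideanSpace ℝ (Fin n)) ∈ K := by simp [hK]
  have hKne : K.Nonempty := ⟨0, h0K⟩
  have hcont1 : ContinuousOn (fun s => ‖c x + J x s‖) K := by fun_prop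
  have hcont2 : ContinuousOn (fun s => ⟪G, s⟫ + ρ * ‖c x + J x s‖) K :=
    ((continuous_const.inner continuous_id).add
      (continuous_const.mul ((continuous_const.add (J x).continuous).norm))).continuousOn
  have hbdd1 : BddBelow ((fun s => ‖c x + J x s‖) '' K) :=
    (hKc.image_of_continuousOn hcont1).bddBelow
  have hbdd2 : BddBelow ((fun s => ⟪G, s⟫ + ρ * ‖c x + J x s‖) '' K) :=
    (hKc.image_of_continuousOn hcont2).bddBelow
  obtain ⟨s₀, hs₀K, hs₀⟩ := hKc.exists_sInf_image_eq hKne hcont1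
  have hθ0 : 0 ≤ thetaMeasure c J x := by
    have h := csInf_le hbdd1 (Set.mem_image_of_mem _ h0K)
    simp only [map_zero, add_zero] at h
    simp only [thetaMeasure]
    linarith
  have hφ0 : 0 ≤ phiMeasure c J x G ρ := by
    have h := csInf_le hbdd2 (Set.mem_image_of_mem _ h0K)
    simp only [map_zero, add_zero, inner_zero_right, zero_add] at h
    simp only [phiMeasure]
    linarith
  refine ⟨?_, hθ0, hφ0⟩
  have hθeq : thetaMeasure c J x = ‖c x‖ - ‖c x + J x s₀‖ := by
    simp only [thetaMeasure]; rw [← hK, hs₀]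
  set θ := thetaMeasure c J x with hθdef
  have hρξ : 0 < ξ * ρ := mul_pos hξ0 hρ
  have hρξ' : 0 < (1 - ξ) * ρ := mul_pos (by linarith) hρ
  by_cases hcase : (1 - ξ) * ρ * θ ≤ ‖G‖
  · have h1 : θ ≤ ‖G‖ / ((1 - ξ) * ρ) := (le_div_iff₀' hρξ').mpr hcase
    have h2 : 0 ≤ phiMeasure c J x G ρ / (ξ * ρ) := div_nonneg hφ0 hρξ.le
    linarith
  · push_neg at hcase
    have hs₀norm : ‖s₀‖ ≤ 1 := by
      simpa [hK, Metric.mem_closedBall] using hs₀K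
    have hinner : ⟪G, s₀⟫ ≤ ‖G‖ := by
      calc ⟪G, s₀⟫ ≤ ‖G‖ * ‖s₀‖ := real_inner_le_norm G s₀
        _ ≤ ‖G‖ * 1 := by
            exact mul_le_mul_of_nonneg_left hs₀norm (norm_nonneg G)
        _ = ‖G‖ := mul_one _
    have hle : sInf ((fun s => ⟪G, s⟫ + ρ * ‖c x + J x s‖) '' K)
        ≤ ⟪G, s₀⟫ + ρ * ‖c x + J x s₀‖ :=
      csInf_le hbdd2 (Set.mem_image_of_mem _ hs₀K)
    have hφlb : ρ * θ - ‖G‖ ≤ phiMeasure c J x G ρ := by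
      simp only [phiMeasure]
      have : ρ * θ = ρ * ‖c x‖ - ρ * ‖c x + J x s₀‖ := by
        rw [hθeq]; ring
      linarith
    have hξρθ : ξ * ρ * θ ≤ phiMeasure c J x G ρ := by nlinarith
    have h1 : θ ≤ phiMeasure c J x G ρ / (ξ * ρ) := by
      rw [le_div_iff₀ hρξ]; linarith [hξρθ]
    have h2 : 0 ≤ ‖G‖ / ((1 - ξ) * ρ) := div_nonneg (norm_nonneg G) hρξ'.le
    linarith
end
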